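/- Let (MΣ, Q1, Q2) be a CQ weakly acyclic input instance, i.e., MΣ is a CQ weakly acyclic materialized-view setting and Q1, Q2 are CQ queries over the schema P of MΣ. Then Q1 is MΣ-conditionally contained in Q2 if and only if, for any one chase result (Q1)^{MΣ} of the MΣ-expansion of Q1 with Υ_{MΣ}, either (Q1)^{MΣ} is the trivial (empty) UCQ^≠ query, or (Q1)^{MΣ} is unconditionally contained in Q2. -/

import Mathlib

namespace CertainViews

/-! ### Values, terms, schemas, instances -/

/-- Values: constants and labeled nulls. -/
inductive Val : Type
  | const : ℕ → Val
  | null : ℕ → Val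
deriving DecidableEq

/-- A value is a constant. -/
def Val.IsConst (a : Val) : Prop := ∃ c, a = Val.const c

/-- Terms of queries and dependencies: query variables and constants. -/
inductive Term : Type
  | var : ℕ → Term
  | const : ℕ → Term
deriving DecidableEq

/-- Evaluation of a term under an assignment of values to variables
(constants are fixed, as in homomorphisms/valuations). -/
def Term.eval (ν : ℕ → Val) : Term → Val
  | .var x => ν x
  | .const c => .const c

/-- A relational schema: a collection of relation symbols, each with a fixed arity. -/
structure Schema : Type 1 where
  rel : Type
  arity : rel → ℕ

variable {S : Schema}

/-- An instance of a schema assigns a relation (a set of tuples of values)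
to each relation symbol. -/
structure Inst (S : Schema) : Type where
  rels : ∀ r : S.rel, Set (Fin (S.arity r) → Val)

/-- The facts of an instance, as a set of (relation symbol, tuple) pairs. -/
def Inst.facts (I : Inst S) : Set ((r : S.rel) × (Fin (S.arity r) → Val)) :=
  { p | p.2 ∈ I.rels p.1 }

/-- The instance determined by a set of facts. -/
def Inst.ofFacts (F : Set ((r : S.rel) × (Fin (S.arity r) → Val))) : Inst S :=
  ⟨fun r => { t | (⟨r, t⟩ : (r : S.rel) × (Fin (S.arity r) → Val)) ∈ F }⟩

/-- A ground instance contains only constants. -/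
def Inst.Ground (I : Inst S) : Prop :=
  ∀ r, ∀ t ∈ I.rels r, ∀ i, (t i).IsConst

/-- The active domain of an instance. -/
def Inst.adom (I : Inst S) : Set Val :=
  { a | ∃ p ∈ I.facts, ∃ i, p.2 i = a }

/-- Applying a mapping on values to all facts of an instance. -/
def Inst.map (ρ : Val → Val) (I : Inst S) : Inst S :=
  Inst.ofFacts ((fun p : (r : S.rel) × (Fin (S.arity r) → Val) =>
    (⟨p.1, fun i => ρ (p.2 i)⟩ : (r : S.rel) × (Fin (S.arity r) → Val))) '' I.facts)

/-- A homomorphism between instances: a mapping of values fixing constants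
that sends facts to facts. -/
def InstHom (J I : Inst S) : Prop :=
  ∃ ρ : Val → Val, (∀ c, ρ (Val.const c) = Val.const c) ∧
    ∀ p ∈ J.facts, (⟨p.1, fun i => ρ (p.2 i)⟩ : (r : S.rel) × (Fin (S.arity r) → Val)) ∈ I.facts

/-! ### Atoms, conjunctive queries -/

/-- A relational atom over a schema. -/
structure Atom (S : Schema) : Type where
  rel : S.rel
  args : Fin (S.arity rel) → Term

/-- Applying a term mapping to an atom. -/
def Atom.mapTerms (f : Term → Term) (A : Atom S) : Atom S :=
  ⟨A.rel, fun i => f (A.args i)⟩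

/-- The variables occurring in a list of atoms. -/
def BodyVars (B : List (Atom S)) : Set ℕ :=
  { x | ∃ A ∈ B, ∃ j, A.args j = Term.var x }

/-- A conjunction of atoms holds in an instance under a valuation. -/
def BodyHolds (ν : ℕ → Val) (B : List (Atom S)) (I : Inst S) : Prop :=
  ∀ A ∈ B, (fun i => (A.args i).eval ν) ∈ I.rels A.rel

/-- The set of facts obtained by applying a valuation to a list of atoms. -/
def factSet (B : List (Atom S)) (ν : ℕ → Val) : Set ((r : S.rel) × (Fin (S.arity r) → Val)) :=
  { p | ∃ A ∈ B, p = ⟨A.rel, fun i => (A.args i).eval ν⟩ }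

/-- A conjunctive query (`CQ` query) of arity `k`: a head vector of terms
and a body that is a finite conjunction of relational atoms. -/
structure CQ (S : Schema) (k : ℕ) : Type where
  head : Fin k → Term
  body : List (Atom S)

/-- Safety of a CQ query: the body is nonempty and every head variable
occurs in the body. -/
def CQ.Safe {k : ℕ} (Q : CQ S k) : Prop :=
  Q.body ≠ [] ∧ ∀ x, (∃ i, Q.head i = Term.var x) → ∃ A ∈ Q.body, ∃ j, A.args j = Term.var x

/-- The answer to a CQ query on an instance: images of the head vector
under all valuations from the body to the instance. -/
def CQ.answer {k : ℕ} (Q : CQ S k) (I : Inst S) : Set (Fin k → Val) :=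
  { t | ∃ ν : ℕ → Val, BodyHolds ν Q.body I ∧ t = fun i => (Q.head i).eval ν }

/-- The constants occurring in a CQ query. -/
def CQ.consts {k : ℕ} (Q : CQ S k) : Set ℕ :=
  { c | (∃ i, Q.head i = Term.const c) ∨ ∃ A ∈ Q.body, ∃ j, A.args j = Term.const c }

/-- A query of arity `k` in an arbitrary query language, identified with its semantics. -/
def GenQuery (S : Schema) (k : ℕ) : Type := Inst S → Set (Fin k → Val)

/-- The tuple of constants corresponding to a tuple of natural numbers. -/
def constTuple {k : ℕ} (t : Fin k → ℕ) : Fin k → Val := fun i => Val.const (t i)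


/-! ### Embedded dependencies: tgds and egds -/

/-- A tuple-generating dependency (tgd)
`∀ x̄ ȳ (φ(x̄,ȳ) → ∃ z̄ ψ(x̄,z̄))`: the body is `φ`; the head is `ψ`; the
existential variables are the head variables not occurring in the body. -/
structure TGD (S : Schema) : Type where
  body : List (Atom S)
  head : List (Atom S)

/-- Satisfaction of a tgd in an instance. -/
def TGD.holds (σ : TGD S) (I : Inst S) : Prop :=
  ∀ ν : ℕ → Val, BodyHolds ν σ.body I →
    ∃ ν' : ℕ → Val, (∀ x ∈ BodyVars σ.body, ν' x = ν x) ∧ BodyHolds ν' σ.head I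

/-- An equality-generating dependency (egd) `∀ x̄ (φ(x̄) → x₁ = x₂)`. -/
structure EGD (S : Schema) : Type where
  body : List (Atom S)
  lhs : ℕ
  rhs : ℕ

/-- Satisfaction of an egd in an instance. -/
def EGD.holds (σ : EGD S) (I : Inst S) : Prop :=
  ∀ ν : ℕ → Val, BodyHolds ν σ.body I → ν σ.lhs = ν σ.rhs

/-- An embedded dependency: a tgd or an egd. -/
inductive Dep (S : Schema) : Type
  | tgd : TGD S → Dep S
  | egd : EGD S → Dep S

def Dep.holds : Dep S → Inst S → Prop
  | .tgd σ, I => σ.holds I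
  | .egd σ, I => σ.holds I

/-- An instance satisfies a set of dependencies. -/
def Inst.satisfiesAll (I : Inst S) (D : Set (Dep S)) : Prop := ∀ d ∈ D, d.holds I

/-- An atom contains no constants. -/
def Atom.ConstantFree (A : Atom S) : Prop := ∀ i, ∃ x, A.args i = Term.var x

/-- A dependency without constants. -/
def Dep.ConstantFree : Dep S → Prop
  | .tgd σ => (∀ A ∈ σ.body, A.ConstantFree) ∧ (∀ A ∈ σ.head, A.ConstantFree)
  | .egd σ => ∀ A ∈ σ.body, A.ConstantFree

/-! ### Weak acyclicity -/

/-- A position of a schema: a relation symbol together with an attribute index. -/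
def Pos (S : Schema) : Type := S.rel × ℕ

/-- Variable `x` occurs in the list of atoms `B` at position `p`. -/
def OccursAt (B : List (Atom S)) (x : ℕ) (p : Pos S) : Prop :=
  ∃ A ∈ B, A.rel = p.1 ∧ ∃ i : Fin (S.arity A.rel), (i : ℕ) = p.2 ∧ A.args i = Term.var x

/-- Regular edge of the dependency graph, induced by a tgd. -/
def TGD.RegularEdge (σ : TGD S) (p q : Pos S) : Prop :=
  ∃ x, OccursAt σ.body x p ∧ x ∈ BodyVars σ.head ∧ OccursAt σ.head x q

/-- Special edge of the dependency graph, induced by a tgd. -/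
def TGD.SpecialEdge (σ : TGD S) (p q : Pos S) : Prop :=
  ∃ x y, OccursAt σ.body x p ∧ x ∈ BodyVars σ.head ∧
    y ∈ BodyVars σ.head ∧ y ∉ BodyVars σ.body ∧ OccursAt σ.head y q

/-- An edge (regular or special) of the dependency graph of a set of dependencies. -/
def DepEdge (D : Set (Dep S)) (p q : Pos S) : Prop :=
  ∃ σ : TGD S, Dep.tgd σ ∈ D ∧ (σ.RegularEdge p q ∨ σ.SpecialEdge p q)

/-- A set of tgds and egds is weakly acyclic iff the dependency graph of its
tgds has no cycle going through a special edge. -/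
def WeaklyAcyclic (D : Set (Dep S)) : Prop :=
  ¬ ∃ (σ : TGD S) (p q : Pos S), Dep.tgd σ ∈ D ∧ σ.SpecialEdge p q ∧
      Relation.ReflTransGen (DepEdge D) q p



/-! ### Views and materialized-view settings -/

/-- A finite set of views over a schema `S`: view names with arities,
each defined by a (safe) CQ query over `S`. -/
structure Views (S : Schema) : Type 1 where
  idx : Type
  finite : Finite idx
  arity : idx → ℕ
  defn : ∀ v : idx, CQ S (arity v)
  safe : ∀ v, (defn v).Safe

/-- The view schema determined by a set of views. -/
def Views.schema {S : Schema} (V : Views S) : Schema := ⟨V.idx, V.arity⟩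

/-- The image of an instance under a set of views: the instance of the view
schema assigning to each view the answer of its defining query. -/
def Views.image {S : Schema} (V : Views S) (I : Inst S) : Inst V.schema :=
  ⟨fun v => (V.defn v).answer I⟩

/-- The fixed part of a materialized-view setting: a schema `P`, a finite set `Σ`
of embedded dependencies without constants on `P`, and a set `V` of CQ views on `P`. -/
structure Frame : Type 1 where
  S : Schema
  deps : Set (Dep S)
  depsFinite : deps.Finite
  depsConstantFree : ∀ d ∈ deps, d.ConstantFree
  views : Views S

/-- A (CQ) materialized-view setting `MΣ = (P, Σ, V, MV)`:
a frame together with a finite ground instance `MV` of the view schema. -/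
structure MVSetting : Type 1 extends Frame where
  mv : Inst views.schema
  mvGround : mv.Ground
  mvFinite : mv.facts.Finite

/-- `V ⇒_{I,Σ} MV`: the ground instance `I` is a `Σ`-valid base instance
for `V` and `MV` (closed-world assumption). -/
def MVSetting.ValidBase (M : MVSetting) (I : Inst M.S) : Prop :=
  I.Ground ∧ I.satisfiesAll M.deps ∧ ∀ v, (M.views.defn v).answer I = M.mv.rels v

/-- A materialized-view setting is valid iff some `Σ`-valid base instance exists. -/
def MVSetting.Valid (M : MVSetting) : Prop := ∃ I, M.ValidBase I

/-- The set of certain answers of a query w.r.t. a materialized-view setting. -/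
def MVSetting.certain (M : MVSetting) {k : ℕ} (Q : GenQuery M.S k) : Set (Fin k → Val) :=
  { t | ∀ I, M.ValidBase I → t ∈ Q I }

/-- `consts(MΣ)`: the constants occurring in `MV` or in the view definitions. -/
def MVSetting.consts (M : MVSetting) : Set ℕ :=
  { c | (∃ p ∈ M.mv.facts, ∃ i, p.2 i = Val.const c) ∨ ∃ v, c ∈ (M.views.defn v).consts }

/-- `MΣ`-conditional containment of queries: `Q₁(I) ⊆ Q₂(I)` for every
`Σ`-valid base instance `I` for `V` and `MV`. -/
def MVSetting.CondContained (M : MVSetting) {k : ℕ} (Q1 Q2 : GenQuery M.S k) : Prop :=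
  ∀ I, M.ValidBase I → Q1 I ⊆ Q2 I

/-- The expansion query `Q₁(t̄) ← C^exp_MV`, where `C^exp_MV` is the expansion of
`MV` over the base schema: each fact of `MV` is replaced by the body of the
corresponding view definition, with head variables bound to the constants of the
fact and with nonhead variables renamed apart across the facts.  Since the
variables are renamed apart, its answer on an instance `I` is `{t̄}` exactly
when every fact of `MV` is an answer to the corresponding view on `I`
(and is empty otherwise). -/
def MVSetting.expansionQuery (M : MVSetting) {k : ℕ} (t : Fin k → ℕ) : GenQuery M.S k :=
  fun I => { u | u = constTuple t ∧ ∀ v, M.mv.rels v ⊆ (M.views.defn v).answer I }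


/-! ### Rewritings in terms of the views -/

/-- Substitution of terms for variables in a term. -/
def Term.subst (h : ℕ → Term) : Term → Term
  | .var x => h x
  | .const c => .const c

/-- The term corresponding to a value (constants to constants, nulls to variables). -/
def Val.toTerm : Val → Term
  | .const c => .const c
  | .null n => .var n

/-- `R^exp` exists and is the query `E` over the base schema:
an expansion of a rewriting `R` over the view schema is a query `E` whose
answer on every base instance is the answer of `R` on the view image. -/
def IsExpansion {S : Schema} (V : Views S) {k : ℕ} (R : GenQuery V.schema k)
    (E : GenQuery S k) : Prop :=
  ∀ I, E I = R (V.image I)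

/-- The expansion `R^exp` over the base schema of a CQ rewriting `R` over the views
of a setting, given by its semantics `R^exp(I) = R(I^{(+V)})`. -/
def MVSetting.expQuery (M : MVSetting) {k : ℕ} (R : CQ M.views.schema k) : GenQuery M.S k :=
  fun I => R.answer (M.views.image I)

/-- `R ⊑_{Σ,MV,V} Q`: the rewriting `R` is `Σ`-conditionally contained in `Q`
w.r.t. `MV` and modulo `V`, i.e., `R^exp(I) ⊆ Q(I)` for every `Σ`-valid base
instance `I` for `V` and `MV`. -/
def MVSetting.RewContained (M : MVSetting) {k : ℕ} (R : CQ M.views.schema k)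
    (Q : GenQuery M.S k) : Prop :=
  ∀ I, M.ValidBase I → M.expQuery R I ⊆ Q I

/-- A head-instantiated rewriting for a ground tuple `t̄`: a safe CQ query over the
view schema with head vector `t̄`, obtained from some safe CQ query with a
constant-free head vector by instantiating its head variables to constants
(mapping all remaining terms to themselves). -/
def IsHeadInstantiated (M : MVSetting) {k : ℕ} (t : Fin k → ℕ)
    (R : CQ M.views.schema k) : Prop :=
  R.Safe ∧ (∀ i, R.head i = Term.const (t i)) ∧
  ∃ Rg : CQ M.views.schema k, Rg.Safe ∧ (∀ i, ∃ x, Rg.head i = Term.var x) ∧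
    ∃ h : ℕ → Term,
      (∀ x, (∃ i, Rg.head i = Term.var x) → ∃ c, h x = Term.const c) ∧
      (∀ x, (¬ ∃ i, Rg.head i = Term.var x) → h x = Term.var x) ∧
      R.head = (fun i => (Rg.head i).subst h) ∧
      R.body = Rg.body.map (Atom.mapTerms (Term.subst h))

/-- A rewriting `R` is `MV`-validated iff its answer on `MV` is nonempty. -/
def MVValidated (M : MVSetting) {k : ℕ} (R : CQ M.views.schema k) : Prop :=
  (R.answer M.mv).Nonempty

/-- The atom over the view schema corresponding to a fact of `MV`. -/
def MVSetting.factAtom (M : MVSetting) (v : M.views.idx)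
    (tv : Fin (M.views.arity v) → Val) : Atom M.views.schema :=
  ⟨v, fun i => (tv i).toTerm⟩

/-- An `MV`-induced rewriting for `t̄`: a CQ rewriting with head vector `t̄`
each of whose subgoals is a fact of `MV`. -/
def IsMVInduced (M : MVSetting) {k : ℕ} (t : Fin k → ℕ) (R : CQ M.views.schema k) : Prop :=
  (∀ i, R.head i = Term.const (t i)) ∧
  ∀ A ∈ R.body, ∃ v, ∃ tv ∈ M.mv.rels v, A = M.factAtom v tv

/-- A maximal `MV`-induced rewriting for `t̄`: an `MV`-induced rewriting for `t̄`
having every fact of `MV` as a subgoal. -/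
def IsMaxMVInduced (M : MVSetting) {k : ℕ} (t : Fin k → ℕ) (R : CQ M.views.schema k) : Prop :=
  IsMVInduced M t R ∧ ∀ v, ∀ tv ∈ M.mv.rels v, M.factAtom v tv ∈ R.body


/-! ### Data exchange: canonical solutions and instance chase -/

/-- The solutions of the data-exchange setting `S^{(de)}(MΣ) = (V, P, Σ_st ∪ Σ)`
associated with a setting `MΣ`, for the source instance `MV`: a target instance `J`
such that `(MV, J)` satisfies the source-to-target tgds
`V(x̄) → ∃ȳ body_V(x̄,ȳ)` (for each view `V`) and the target dependencies `Σ`. -/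
def MVSetting.DESolution (M : MVSetting) (J : Inst M.S) : Prop :=
  J.satisfiesAll M.deps ∧ ∀ v, M.mv.rels v ⊆ (M.views.defn v).answer J

/-- A (standard) instance-chase step with a tgd: an applicable trigger whose head is
added with fresh distinct nulls for the existential variables. -/
def tgdStep {S : Schema} (σ : TGD S) (J J' : Inst S) : Prop :=
  ∃ h : ℕ → Val, BodyHolds h σ.body J ∧
    ¬ (∃ g : ℕ → Val, (∀ x ∈ BodyVars σ.body, g x = h x) ∧ BodyHolds g σ.head J) ∧
    ∃ h' : ℕ → Val, (∀ x ∈ BodyVars σ.body, h' x = h x) ∧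
      (∀ x ∈ BodyVars σ.head, x ∉ BodyVars σ.body →
        (∃ n, h' x = Val.null n) ∧ h' x ∉ J.adom) ∧
      Set.InjOn h' { x | x ∈ BodyVars σ.head ∧ x ∉ BodyVars σ.body } ∧
      J' = Inst.ofFacts (J.facts ∪ factSet σ.head h')

/-- A successful instance-chase step with an egd: a violating trigger in which at
least one of the two values is a null, which is then replaced by the other value. -/
def egdStepOk {S : Schema} (σ : EGD S) (J J' : Inst S) : Prop :=
  ∃ h : ℕ → Val, BodyHolds h σ.body J ∧ h σ.lhs ≠ h σ.rhs ∧
    (((∃ n, h σ.lhs = Val.null n) ∧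
        J' = J.map (fun a => if a = h σ.lhs then h σ.rhs else a)) ∨
     ((∃ n, h σ.rhs = Val.null n) ∧
        J' = J.map (fun a => if a = h σ.rhs then h σ.lhs else a)))

/-- A failing instance-chase step with an egd: a violating trigger equating two
distinct constants. -/
def egdStepFail {S : Schema} (σ : EGD S) (J : Inst S) : Prop :=
  ∃ h : ℕ → Val, BodyHolds h σ.body J ∧ h σ.lhs ≠ h σ.rhs ∧
    (h σ.lhs).IsConst ∧ (h σ.rhs).IsConst

/-- A successful chase step with some dependency of a set. -/
def depStepTo {S : Schema} (D : Set (Dep S)) (J J' : Inst S) : Prop :=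
  (∃ σ : TGD S, Dep.tgd σ ∈ D ∧ tgdStep σ J J') ∨
  (∃ σ : EGD S, Dep.egd σ ∈ D ∧ egdStepOk σ J J')

/-- `J` is a (terminal) result of chasing `J0` with the dependencies `D`. -/
def ChaseResult {S : Schema} (D : Set (Dep S)) (J0 J : Inst S) : Prop :=
  Relation.ReflTransGen (depStepTo D) J0 J ∧ J.satisfiesAll D

/-- The result of chasing the source instance `MV` with the source-to-target tgds
`Σ_st` of the associated data-exchange setting: for each fact `t ∈ MV[V]`, the body
of the view definition of `V` is added, with the head variables bound to `t` and
with fresh, globally distinct nulls for the nonhead variables. -/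
def MVSetting.IsPreSolution (M : MVSetting) (J : Inst M.S) : Prop :=
  ∃ ν : (v : M.views.idx) → (Fin (M.views.arity v) → Val) → ℕ → Val,
    (∀ v, ∀ t ∈ M.mv.rels v, ∀ i, ((M.views.defn v).head i).eval (ν v t) = t i) ∧
    (∀ v, ∀ t ∈ M.mv.rels v, ∀ x ∈ BodyVars (M.views.defn v).body,
      (¬ ∃ i, (M.views.defn v).head i = Term.var x) → ∃ n, ν v t x = Val.null n) ∧
    (∀ v v' t t' x x', t ∈ M.mv.rels v → t' ∈ M.mv.rels v' →
      x ∈ BodyVars (M.views.defn v).body →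
      (¬ ∃ i, (M.views.defn v).head i = Term.var x) →
      x' ∈ BodyVars (M.views.defn v').body →
      (¬ ∃ i, (M.views.defn v').head i = Term.var x') →
      ν v t x = ν v' t' x' → v = v' ∧ HEq t t' ∧ x = x') ∧
    J.facts = ⋃ v, ⋃ t ∈ M.mv.rels v, factSet (M.views.defn v).body (ν v t)

/-- `J_de^{MΣ}`: a canonical universal solution for the source instance `MV` in the
data-exchange setting associated with `MΣ`, i.e., a terminal result of chasing `MV`
with `Σ_st ∪ Σ`. -/
def MVSetting.IsCanonicalSolution (M : MVSetting) (J : Inst M.S) : Prop :=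
  ∃ J0, M.IsPreSolution J0 ∧ ChaseResult M.deps J0 J

/-! ### MV-enhanced chase (view-verified data exchange) -/

/-- Applying, to an instance, the conjunction of equalities forcing the values
`vals j` to become the values `tgt j` (a disjunct of an `MV`-induced disjunctive
egd): succeeds iff there is a substitution fixing the constants and all other
values that realizes the equalities. -/
def substResult {S : Schema} (J J' : Inst S) {k : ℕ} (vals tgt : Fin k → Val) : Prop :=
  ∃ ρ : Val → Val, (∀ c, ρ (Val.const c) = Val.const c) ∧
    (∀ a, (∀ j, a ≠ vals j) → ρ a = a) ∧ (∀ j, ρ (vals j) = tgt j) ∧ J' = J.map ρ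

/-- The values of the head vector of a CQ under a valuation. -/
def headVals {S : Schema} {k : ℕ} (Q : CQ S k) (h : ℕ → Val) : Fin k → Val :=
  fun i => (Q.head i).eval h

/-- The set of results of one chase step with the `MV`-induced generalized egd of a
view `v` on an instance `J` (with trigger `h`): one (successful) result for each
tuple of `MV[v]`, or the empty instance `ε` (here: `none`) if all disjuncts fail. -/
def MVSetting.gedResults (M : MVSetting) (v : M.views.idx) (J : Inst M.S)
    (h : ℕ → Val) : Set (Option (Inst M.S)) :=
  { o | (∃ t ∈ M.mv.rels v, ∃ J', o = some J' ∧
           substResult J J' (headVals (M.views.defn v) h) t)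
      ∨ (o = none ∧ ∀ t ∈ M.mv.rels v,
           ¬ ∃ J', substResult J J' (headVals (M.views.defn v) h) t) }

/-- The step system of the `MV`-enhanced chase with `Σ ∪ Σ^{(MΣ)}` on instances:
to each node (an instance, or the empty instance `ε` = `none`) it assigns the
possible chase steps, each step being the set of its results.  The steps are:
chase steps with the tgds and egds of `Σ`; steps with the `MV`-induced implication
constraint `body_V → false` of each view `V` with `MV[V] = ∅`; and steps with the
`MV`-induced disjunctive egd `body_V(x̄,ȳ) → ⋁_i (x̄ = t̄ᵢ)` of each view `V` of
positive arity with `MV[V] ≠ ∅`. -/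
def MVSetting.mvChaseSteps (M : MVSetting) :
    Option (Inst M.S) → Set (Set (Option (Inst M.S)))
  | none => ∅
  | some J =>
    { C | (∃ σ : TGD M.S, Dep.tgd σ ∈ M.deps ∧ ∃ J', tgdStep σ J J' ∧ C = {some J'})
        ∨ (∃ σ : EGD M.S, Dep.egd σ ∈ M.deps ∧ ∃ J', egdStepOk σ J J' ∧ C = {some J'})
        ∨ (∃ σ : EGD M.S, Dep.egd σ ∈ M.deps ∧ egdStepFail σ J ∧
             C = {(none : Option (Inst M.S))})
        ∨ (∃ v, M.mv.rels v = ∅ ∧ (∃ h, BodyHolds h (M.views.defn v).body J) ∧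
             C = {(none : Option (Inst M.S))})
        ∨ (∃ v, (M.mv.rels v).Nonempty ∧ 1 ≤ M.views.arity v ∧ ∃ h : ℕ → Val,
             BodyHolds h (M.views.defn v).body J ∧
             (∀ t ∈ M.mv.rels v, ∃ i, headVals (M.views.defn v) h i ≠ t i) ∧
             C = M.gedResults v J h) }

/-- One edge of the MV-enhanced chase: passing from a node to one of the results of
an applicable chase step. -/
def MVSetting.mvStep (M : MVSetting) (a b : Option (Inst M.S)) : Prop :=
  ∃ C ∈ M.mvChaseSteps a, b ∈ C

/-- Reachability along MV-enhanced chase steps. -/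
def MVSetting.mvReach (M : MVSetting) : Option (Inst M.S) → Option (Inst M.S) → Prop :=
  Relation.ReflTransGen M.mvStep

/-- A view-verified universal solution for `MΣ`: a nonempty leaf of a (finite)
MV-enhanced chase of a canonical universal solution `J_de^{MΣ}` with
`Σ ∪ Σ^{(MΣ)}`, i.e., a terminal nonempty instance reachable from `J_de^{MΣ}`. -/
def MVSetting.IsVVSolution (M : MVSetting) (J : Inst M.S) : Prop :=
  ∃ Jde, M.IsCanonicalSolution Jde ∧ M.mvReach (some Jde) (some J) ∧
    M.mvChaseSteps (some J) = ∅

/-- A grounded version of an instance `J`: the result of consistently replacing all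
its nulls with distinct new constants (avoiding the constants in `avoid`). -/
def GroundedVersion {S : Schema} (avoid : Set ℕ) (J J' : Inst S) : Prop :=
  ∃ ρ : Val → Val, (∀ c, ρ (Val.const c) = Val.const c) ∧
    (∀ n, ∃ c, ρ (Val.null n) = Val.const c ∧ c ∉ avoid ∧ Val.const c ∉ J.adom) ∧
    Set.InjOn ρ J.adom ∧ J' = J.map ρ

/-- Chains of a given length for a binary relation. -/
def chainOfLength {α : Type*} (R : α → α → Prop) : ℕ → α → α → Prop
  | 0, a, b => a = b
  | n + 1, a, b => ∃ c, R a c ∧ chainOfLength R n c b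


/-! ### Finitely-branching rooted trees, for chase trees -/

/-- Finite rooted trees with labels in `β`. -/
inductive RTree (β : Type) : Type
  | node : β → List (RTree β) → RTree β

namespace RTree

variable {β : Type}

/-- The label of the root. -/
def label : RTree β → β
  | .node b _ => b

mutual
  /-- The depth of a tree (a single node has depth 1). -/
  def depth : RTree β → ℕ
    | .node _ ts => depthL ts + 1
  def depthL : List (RTree β) → ℕ
    | [] => 0
    | t :: ts => max (depth t) (depthL ts)
end

mutual
  /-- The number of leaves of a tree. -/
  def leafCount : RTree β → ℕ
    | .node _ [] => 1
    | .node _ (t :: ts) => leafCount t + leafCountL ts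
  def leafCountL : List (RTree β) → ℕ
    | [] => 0
    | t :: ts => leafCount t + leafCountL ts
end

mutual
  /-- The list of labels of the leaves of a tree. -/
  def leaves : RTree β → List β
    | .node b [] => [b]
    | .node _ (t :: ts) => leaves t ++ leavesL ts
  def leavesL : List (RTree β) → List β
    | [] => []
    | t :: ts => leaves t ++ leavesL ts
end

/-- The labels of a list of trees, as a set. -/
def labelsOf (ts : List (RTree β)) : Set β := { b | ∃ t ∈ ts, label t = b }

mutual
  /-- A chase tree for a disjunctive-step system `D` (assigning to each node label
  the set of possible chase steps, each step given by the set of its results):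
  each inner node's children are exactly the results of one applicable chase step,
  and leaves are exactly the nodes to which no chase step applies. -/
  def Valid (D : β → Set (Set β)) : RTree β → Prop
    | .node b ts => (D b = ∅ ∧ ts = []) ∨
        (∃ C ∈ D b, labelsOf ts = C ∧ ValidL D ts)
  def ValidL (D : β → Set (Set β)) : List (RTree β) → Prop
    | [] => True
    | t :: ts => Valid D t ∧ ValidL D ts
end

end RTree





/-! ### CQ queries with disequalities and unions thereof -/

/-- A `CQ^≠` query: a CQ query whose body may also contain disequality atoms. -/
structure CQNeq (S : Schema) (k : ℕ) : Type where
  head : Fin k → Term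
  body : List (Atom S)
  diseqs : List (Term × Term)

/-- The answer to a `CQ^≠` query on an instance (via valuations: homomorphisms
from the relational atoms that satisfy all the disequalities). -/
def CQNeq.answer {k : ℕ} (Q : CQNeq S k) (I : Inst S) : Set (Fin k → Val) :=
  { t | ∃ ν : ℕ → Val, BodyHolds ν Q.body I ∧
      (∀ p ∈ Q.diseqs, p.1.eval ν ≠ p.2.eval ν) ∧ t = fun i => (Q.head i).eval ν }

/-- The answer to a `UCQ^≠` query (a finite set of `CQ^≠` components; the
trivial query `[]` has empty answer on every instance). -/
def ucqAnswer {k : ℕ} (R : List (CQNeq S k)) (I : Inst S) : Set (Fin k → Val) :=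
  { t | ∃ q ∈ R, t ∈ q.answer I }

/-- The terms occurring in a `CQ^≠` query. -/
def CQNeq.terms {k : ℕ} (Q : CQNeq S k) : Set Term :=
  { u | (∃ i, Q.head i = u) ∨ (∃ A ∈ Q.body, ∃ j, A.args j = u) ∨
        (∃ p ∈ Q.diseqs, p.1 = u ∨ p.2 = u) }

/-- Applying a term mapping to a `CQ^≠` query. -/
def CQNeq.mapTerms {k : ℕ} (θ : Term → Term) (Q : CQNeq S k) : CQNeq S k :=
  ⟨fun i => θ (Q.head i), Q.body.map (Atom.mapTerms θ), Q.diseqs.map fun p => (θ p.1, θ p.2)⟩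

/-- The query has the disequality atom `a ≠ b` (in either orientation). -/
def CQNeq.hasDiseq {k : ℕ} (Q : CQNeq S k) (a b : Term) : Prop :=
  (a, b) ∈ Q.diseqs ∨ (b, a) ∈ Q.diseqs

/-- A homomorphism (on the query level) from a conjunction of atoms into the
body of a `CQ^≠` query. -/
def homTo {k : ℕ} (h : ℕ → Term) (B : List (Atom S)) (Q : CQNeq S k) : Prop :=
  ∀ A ∈ B, A.mapTerms (Term.subst h) ∈ Q.body

/-- The size of an atom. -/
def Atom.size (A : Atom S) : ℕ := 1 + S.arity A.rel

/-- The size of a CQ query. -/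
def CQSize {k : ℕ} (_head : Fin k → Term) (body : List (Atom S)) : ℕ :=
  k + (body.map Atom.size).sum

def CQ.size {k : ℕ} (Q : CQ S k) : ℕ := CQSize Q.head Q.body
def CQNeq.size {k : ℕ} (Q : CQNeq S k) : ℕ := CQSize Q.head Q.body + Q.diseqs.length

/-! ### Normalization of conjunctions of atoms -/

/-- The original (renamed-apart) copy of a term: variable `x` becomes `2x`,
so that the fresh variables introduced by normalization (odd numbers) are new. -/
def Term.orig : Term → Term
  | .var x => .var (2 * x)
  | .const c => .const c

/-- The original (renamed) copy of an atom. -/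
def Atom.orig (A : Atom S) : Atom S := A.mapTerms Term.orig

/-- The argument list of an atom. -/
def Atom.argsList (A : Atom S) : List Term := List.ofFn A.args

/-- The term in position `(j, i)` of a list of atoms, if any. -/
def atomArg? (B : List (Atom S)) (j i : ℕ) : Option Term :=
  match B[j]? with
  | none => none
  | some A => A.argsList[i]?

/-- Whether the occurrence at position `(j, i)` is a duplicate occurrence,
i.e., the same variable or constant already occurs at an earlier position. -/
def isDup (B : List (Atom S)) (j i : ℕ) : Bool :=
  match atomArg? B j i with
  | none => false
  | some u =>
      (List.range B.length).any fun j' =>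
        match B[j']? with
        | none => false
        | some A' =>
            (List.range A'.argsList.length).any fun i' =>
              (decide (j' < j) || (decide (j' = j) && decide (i' < i))) &&
              decide (A'.argsList[i']? = some u)

/-- The fresh variable replacing the duplicate occurrence at position `(j, i)`. -/
def freshVar (j i : ℕ) : Term := Term.var (2 * Nat.pair j i + 1)

/-- The normalized copy of the atom at index `j` of `B`: each duplicate occurrence
of a variable or constant is replaced by a fresh distinct variable. -/
def normAtom (B : List (Atom S)) (j : ℕ) (A : Atom S) : Atom S :=
  ⟨A.rel, fun i => if isDup B j (i : ℕ) then freshVar j (i : ℕ) else (A.args i).orig⟩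

/-- `ℛ(φ⁽ⁿ⁾)`: the relational part of the normalized version of a conjunction of
atoms. -/
def normBody (B : List (Atom S)) : List (Atom S) :=
  (B.zipIdx.map Prod.swap).map fun p => normAtom B p.1 p.2

/-- `ℰ(φ⁽ⁿ⁾)`: the equality atoms of the normalized version, equating each fresh
variable with the term it replaced. -/
def normEqs (B : List (Atom S)) : List (Term × Term) :=
  ((B.zipIdx.map Prod.swap).map fun p =>
    (p.2.argsList.zipIdx.map Prod.swap).filterMap fun q =>
      if isDup B p.1 q.1 then some (freshVar p.1 q.1, q.2.orig) else none).flatten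


/-! ### Generalized dependencies and the chase of `CQ^≠` queries with `Υ_{MΣ}` -/

/-- A disjunct of the consequent of a generalized dependency: an existentially
quantified conjunction of relational atoms, a conjunction of equalities, or a
single disequality.  (`false`, as in generalized implication constraints, is
represented by the absence of disjuncts.) -/
inductive GDisj (S : Schema) : Type
  | exAtoms : List (Atom S) → GDisj S
  | eqs : List (Term × Term) → GDisj S
  | neq : Term → Term → GDisj S

/-- A generalized dependency: an antecedent (a conjunction of relational atoms)
and a finite disjunction of disjuncts. -/
structure GDep (S : Schema) : Type where
  ante : List (Atom S)
  disjs : List (GDisj S)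

variable {S : Schema} {k : ℕ}

/-- Two terms are unequal for trivial reasons (distinct constants). -/
def diseqTaut (a b : Term) : Prop :=
  ∃ c d, a = Term.const c ∧ b = Term.const d ∧ c ≠ d

/-- A disjunct is already satisfied (is a tautology) in a `CQ^≠` query under a
trigger `h` (with `av` the variables of the antecedent). -/
def disjSat (Q : CQNeq S k) (h : ℕ → Term) (av : Set ℕ) : GDisj S → Prop
  | .exAtoms ψ => ∃ h' : ℕ → Term, (∀ x ∈ av, h' x = h x) ∧
      ∀ A ∈ ψ, A.mapTerms (Term.subst h') ∈ Q.body
  | .eqs L => ∀ p ∈ L, p.1.subst h = p.2.subst h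
  | .neq a b => diseqTaut (a.subst h) (b.subst h) ∨ Q.hasDiseq (a.subst h) (b.subst h)

/-- The result of a chase step on a `CQ^≠` query with an equality conjunct:
the query is rewritten by a substitution that realizes all the equalities,
fixes the constants, and is the identity outside the terms being equated.
The step requires that none of the equated pairs be disequated in the query. -/
def eqsChild (Q : CQNeq S k) (h : ℕ → Term) (L : List (Term × Term)) (Q' : CQNeq S k) : Prop :=
  (∀ p ∈ L, ¬ Q.hasDiseq (p.1.subst h) (p.2.subst h)) ∧
  ∃ θ : Term → Term, (∀ c, θ (Term.const c) = Term.const c) ∧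
    (∀ u, (∀ p ∈ L, u ≠ p.1.subst h ∧ u ≠ p.2.subst h) → θ u = u) ∧
    (∀ p ∈ L, θ (p.1.subst h) = θ (p.2.subst h)) ∧
    (∀ u, θ u = u ∨ ∃ p ∈ L, θ u = θ (p.1.subst h)) ∧
    Q' = Q.mapTerms θ

/-- A chase step with an equality conjunct fails (e.g., it equates distinct
constants, or terms that are explicitly disequated in the query). -/
def eqsFails (Q : CQNeq S k) (h : ℕ → Term) (L : List (Term × Term)) : Prop :=
  ¬ ∃ Q', eqsChild Q h L Q'

/-- The result of a chase step with a disequality disjunct: the disequality is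
added to the query. -/
def neqChild (Q : CQNeq S k) (h : ℕ → Term) (a b : Term) (Q' : CQNeq S k) : Prop :=
  a.subst h ≠ b.subst h ∧
  Q' = ⟨Q.head, Q.body, Q.diseqs ++ [(a.subst h, b.subst h)]⟩

/-- A chase step with a disequality disjunct fails: the two sides are the same
variable or the same constant. -/
def neqFails (_Q : CQNeq S k) (h : ℕ → Term) (a b : Term) : Prop :=
  a.subst h = b.subst h

/-- The result of a chase step with an existential-atoms disjunct: the image of the
atoms is conjoined to the body, with fresh distinct variables for the
existential variables. -/
def exAtomsChild (Q : CQNeq S k) (h : ℕ → Term) (av : Set ℕ) (ψ : List (Atom S))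
    (Q' : CQNeq S k) : Prop :=
  ∃ h' : ℕ → Term, (∀ x ∈ av, h' x = h x) ∧
    (∀ x ∈ BodyVars ψ, x ∉ av → ∃ y, h' x = Term.var y ∧ Term.var y ∉ Q.terms) ∧
    Set.InjOn h' { x | x ∈ BodyVars ψ ∧ x ∉ av } ∧
    Q' = ⟨Q.head, Q.body ++ ψ.map (Atom.mapTerms (Term.subst h')), Q.diseqs⟩

/-- The (successful) results of applying one disjunct in a chase step. -/
def disjChild (Q : CQNeq S k) (h : ℕ → Term) (av : Set ℕ) :
    GDisj S → Set (Option (CQNeq S k))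
  | .exAtoms ψ => { o | ∃ Q', o = some Q' ∧ exAtomsChild Q h av ψ Q' }
  | .eqs L => { o | ∃ Q', o = some Q' ∧ eqsChild Q h L Q' }
  | .neq a b => { o | ∃ Q', o = some Q' ∧ neqChild Q h a b Q' }

/-- Whether applying a disjunct in a chase step fails. -/
def disjFails (Q : CQNeq S k) (h : ℕ → Term) : GDisj S → Prop
  | .exAtoms _ => False
  | .eqs L => eqsFails Q h L
  | .neq a b => neqFails Q h a b

/-- The set of results of one chase step with a generalized dependency `g` on a
`CQ^≠` query `Q` with trigger `h`: the successful results of the disjuncts, or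
the trivial query `ε` (= `none`) if all disjuncts fail. -/
def gdepResults (g : GDep S) (Q : CQNeq S k) (h : ℕ → Term) : Set (Option (CQNeq S k)) :=
  { o | (∃ d ∈ g.disjs, o ∈ disjChild Q h (BodyVars g.ante) d)
      ∨ (o = none ∧ ∀ d ∈ g.disjs, disjFails Q h d) }

/-- The possible chase steps with a generalized dependency on a `CQ^≠` query:
a trigger from the antecedent into the body such that no disjunct is already
satisfied, together with the resulting set of children. -/
def gdepSteps (g : GDep S) (Q : CQNeq S k) : Set (Set (Option (CQNeq S k))) :=
  { C | ∃ h : ℕ → Term, homTo h g.ante Q ∧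
      (∀ d ∈ g.disjs, ¬ disjSat Q h (BodyVars g.ante) d) ∧ C = gdepResults g Q h }

/-- The `≠`-transformation `σ_(≠)` of a tgd `σ : φ → ∃z̄ ψ`:
`ℛ(φ⁽ⁿ⁾) → (∃z̄ ψ) ∨ ¬ℰ(φ⁽ⁿ⁾)`. -/
def TGD.neqT (σ : TGD S) : GDep S :=
  ⟨normBody σ.body,
   GDisj.exAtoms (σ.head.map Atom.orig) :: (normEqs σ.body).map fun p => GDisj.neq p.1 p.2⟩

/-- The `≠`-transformation `σ_(≠)` of an egd `σ : φ → x₁ = x₂`: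
`ℛ(φ⁽ⁿ⁾) → (x₁ = x₂) ∨ ¬ℰ(φ⁽ⁿ⁾)`. -/
def EGD.neqT (σ : EGD S) : GDep S :=
  ⟨normBody σ.body,
   GDisj.eqs [((Term.var σ.lhs).orig, (Term.var σ.rhs).orig)] ::
     (normEqs σ.body).map fun p => GDisj.neq p.1 p.2⟩

/-- The `MV`-induced generalized implication constraint `ι_V` of a view `V` with
`MV[V] = ∅`:  `ℛ(φ⁽ⁿ⁾) → false ∨ ¬ℰ(φ⁽ⁿ⁾)`. -/
def MVSetting.gicDep (M : MVSetting) (v : M.views.idx) : GDep M.S :=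
  ⟨normBody (M.views.defn v).body,
   (normEqs (M.views.defn v).body).map fun p => GDisj.neq p.1 p.2⟩

/-- The equalities `x̄ = t̄` between the (normalized) head vector of a view and a
tuple of `MV`. -/
def MVSetting.gnegdPairs (M : MVSetting) (v : M.views.idx)
    (t : Fin (M.views.arity v) → Val) : List (Term × Term) :=
  List.ofFn fun i => (((M.views.defn v).head i).orig, (t i).toTerm)

/-- The possible chase steps with the `MV`-induced generalized negd `τ_V` of a view
`V` of positive arity with `MV[V] ≠ ∅`:
`ℛ(φ⁽ⁿ⁾) → ⋁_{i} (x̄ = t̄ᵢ) ∨ ¬ℰ(φ⁽ⁿ⁾)`, one equality disjunct per tuple of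
`MV[V]`. -/
def MVSetting.gnegdSteps (M : MVSetting) {k : ℕ} (v : M.views.idx) (Q : CQNeq M.S k) :
    Set (Set (Option (CQNeq M.S k))) :=
  { C | (M.mv.rels v).Nonempty ∧ 1 ≤ M.views.arity v ∧
      ∃ h : ℕ → Term, homTo h (normBody (M.views.defn v).body) Q ∧
        (∀ t ∈ M.mv.rels v,
          ¬ disjSat Q h (BodyVars (normBody (M.views.defn v).body)) (GDisj.eqs (M.gnegdPairs v t))) ∧
        (∀ p ∈ normEqs (M.views.defn v).body,
          ¬ disjSat Q h (BodyVars (normBody (M.views.defn v).body)) (GDisj.neq p.1 p.2)) ∧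
        C = { o | (∃ t ∈ M.mv.rels v,
                    o ∈ disjChild Q h (BodyVars (normBody (M.views.defn v).body))
                        (GDisj.eqs (M.gnegdPairs v t)))
               ∨ (∃ p ∈ normEqs (M.views.defn v).body,
                    o ∈ disjChild Q h (BodyVars (normBody (M.views.defn v).body))
                        (GDisj.neq p.1 p.2))
               ∨ (o = none ∧
                    (∀ t ∈ M.mv.rels v, disjFails Q h (GDisj.eqs (M.gnegdPairs v t))) ∧
                    (∀ p ∈ normEqs (M.views.defn v).body, disjFails Q h (GDisj.neq p.1 p.2))) } }

/-- The step system of the chase of `CQ^≠` queries with the dependencies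
`Υ_{MΣ} = Φ_(MV) ∪ Σ_(≠)`: steps with the `≠`-transformations of the tgds and
egds of `Σ`, with the `MV`-induced generalized implication constraints, and with
the `MV`-induced generalized negds.  (`none` is the node `ε`.) -/
def MVSetting.qSteps (M : MVSetting) (k : ℕ) :
    Option (CQNeq M.S k) → Set (Set (Option (CQNeq M.S k)))
  | none => ∅
  | some Q =>
    { C | (∃ σ : TGD M.S, Dep.tgd σ ∈ M.deps ∧ C ∈ gdepSteps σ.neqT Q)
        ∨ (∃ σ : EGD M.S, Dep.egd σ ∈ M.deps ∧ C ∈ gdepSteps σ.neqT Q)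
        ∨ (∃ v, M.mv.rels v = ∅ ∧ C ∈ gdepSteps (M.gicDep v) Q)
        ∨ (∃ v, C ∈ M.gnegdSteps v Q) }

/-- One edge of the chase of `CQ^≠` queries with `Υ_{MΣ}`. -/
def MVSetting.qStep (M : MVSetting) (k : ℕ) (a b : Option (CQNeq M.S k)) : Prop :=
  ∃ C ∈ M.qSteps k a, b ∈ C

/-- The `MΣ`-expansion `Q'` of a CQ query `Q`: the `CQ^≠` query (without
disequalities) obtained by conjoining the body of `Q` with `C^exp_MV`, the
expansion of `MV` over the base schema, in which all the variables of
`C^exp_MV` have been renamed apart from those of `Q` (the head variables of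
each view definition being bound to the constants of the corresponding fact
of `MV`, and its nonhead variables being mapped to globally distinct fresh
variables). -/
def MVSetting.IsMSExpansion (M : MVSetting) {k : ℕ} (Q : CQ M.S k) (Q' : CQNeq M.S k) : Prop :=
  Q'.head = Q.head ∧ Q'.diseqs = [] ∧
  ∃ ν : (v : M.views.idx) → (Fin (M.views.arity v) → Val) → ℕ → Term,
    (∀ v, ∀ t ∈ M.mv.rels v, ∀ i,
      ((M.views.defn v).head i).subst (ν v t) = (t i).toTerm) ∧
    (∀ v, ∀ t ∈ M.mv.rels v, ∀ x ∈ BodyVars (M.views.defn v).body,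
      (¬ ∃ i, (M.views.defn v).head i = Term.var x) →
      ∃ y, ν v t x = Term.var y ∧
        (∀ i, Q.head i ≠ Term.var y) ∧ ¬ ∃ A ∈ Q.body, ∃ j, A.args j = Term.var y) ∧
    (∀ v v' t t' x x', t ∈ M.mv.rels v → t' ∈ M.mv.rels v' →
      x ∈ BodyVars (M.views.defn v).body →
      (¬ ∃ i, (M.views.defn v).head i = Term.var x) →
      x' ∈ BodyVars (M.views.defn v').body →
      (¬ ∃ i, (M.views.defn v').head i = Term.var x') →
      ν v t x = ν v' t' x' → v = v' ∧ HEq t t' ∧ x = x') ∧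
    { A | A ∈ Q'.body } =
      { A | A ∈ Q.body } ∪
      { A | ∃ v, ∃ t ∈ M.mv.rels v, ∃ A0 ∈ (M.views.defn v).body,
              A = A0.mapTerms (Term.subst (ν v t)) }

/-- `R` is a chase result `(Q)^{MΣ}` of the `CQ^≠` query `Q0` with `Υ_{MΣ}`:
the `UCQ^≠` query whose components are the non-`ε` leaves of a (finite) chase
tree for `MΣ` and `Q0`. -/
def MVSetting.IsChaseResult (M : MVSetting) {k : ℕ} (Q0 : CQNeq M.S k)
    (R : List (CQNeq M.S k)) : Prop :=
  ∃ T : RTree (Option (CQNeq M.S k)), T.label = some Q0 ∧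
    RTree.Valid (M.qSteps k) T ∧ R = T.leaves.filterMap id


/-! ### Complexity: polynomial time, `Π^p_2`, and concrete problem encodings -/

/-- A polynomial-time computable function on natural numbers (under the standard
binary encoding), via Mathlib's Turing-machine model. -/
def PTimeFun (f : ℕ → ℕ) : Prop :=
  Nonempty (Turing.TM2ComputableInPolyTime
    Computability.encodingNatBool.encode Computability.encodingNatBool.encode f)

/-- Pairing of three inputs into one. -/
def tripleCode (x y z : ℕ) : ℕ := Nat.pair x (Nat.pair y z)

/-- Membership in `Π^p_2` (the second level of the polynomial hierarchy) of a
language of (binary-encoded) natural numbers: a `∀∃` certificate characterization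
with polynomial certificate bounds and a polynomial-time verifier. -/
def InPi2P (L : Set ℕ) : Prop :=
  ∃ (c : ℕ) (f : ℕ → ℕ), PTimeFun f ∧
    ∀ x, x ∈ L ↔ ∀ y, Nat.size y ≤ (Nat.size x + 1) ^ c →
      ∃ z, Nat.size z ≤ (Nat.size x + 1) ^ c ∧ f (tripleCode x y z) = 1

/-- Polynomial-time many-one reducibility. -/
def PolyReduces (A B : Set ℕ) : Prop :=
  ∃ f : ℕ → ℕ, PTimeFun f ∧ ∀ x, x ∈ A ↔ f x ∈ B

/-- `Π^p_2`-hardness of a language. -/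
def Pi2PHard (L : Set ℕ) : Prop := ∀ A, InPi2P A → PolyReduces A L

instance : Encodable Term :=
  Encodable.ofEquiv (ℕ ⊕ ℕ)
    { toFun := fun t => match t with | .var x => .inl x | .const c => .inr c
      invFun := fun s => match s with | .inl x => .var x | .inr c => .const c
      left_inv := fun t => by cases t <;> rfl
      right_inv := fun s => by cases s <;> rfl }

/-- A concrete schema: relation symbols `0, …, m-1` with given arities. -/
structure CSchema : Type where
  m : ℕ
  ar : Fin m → ℕ

/-- The schema denoted by a concrete schema. -/
abbrev CSchema.toSchema (C : CSchema) : Schema := ⟨Fin C.m, C.ar⟩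

/-- A concrete finite set of views over a concrete schema:
view names `0, …, l-1` with arities, defined by safe CQ queries. -/
structure CViews (C : CSchema) : Type where
  l : ℕ
  var : Fin l → ℕ
  defn : ∀ v : Fin l, CQ C.toSchema (var v)
  safe : ∀ v, (defn v).Safe

/-- The set of views denoted by a concrete set of views. -/
def CViews.toViews {C : CSchema} (W : CViews C) : Views C.toSchema :=
  ⟨Fin W.l, inferInstance, W.var, W.defn, W.safe⟩

/-- The concrete syntax of an atom over a concrete schema. -/
def Atom.syn {C : CSchema} (A : Atom C.toSchema) : ℕ × List Term :=
  (A.rel.val, List.ofFn A.args)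

/-- The concrete syntax of a CQ query over a concrete schema. -/
def CQ.syn {C : CSchema} {k : ℕ} (Q : CQ C.toSchema k) : List Term × List (ℕ × List Term) :=
  (List.ofFn Q.head, Q.body.map Atom.syn)

/-- The ground instance of the view schema denoted by a concrete list of view facts
(each a view index together with a list of constants). -/
def mvDen {C : CSchema} (W : CViews C) (L : List (ℕ × List ℕ)) : Inst W.toViews.schema :=
  ⟨fun v => { t | ∃ e ∈ L, e.1 = v.val ∧ ∃ hl : e.2.length = W.var v,
      t = fun i => Val.const (e.2.get (Fin.cast hl.symm i)) }⟩

/-- The certain-query-answer problem, as a language: the fixed parts are a schema,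
a set of dependencies, and the view definitions; the input is (an encoding of) a
CQ query `Q`, a ground tuple `t̄` of length equal to the arity of `Q`, and a set of
view answers `MV`, and the yes-instances are those in which `t̄` is a certain
answer to `Q` w.r.t. the setting `(P, Σ, V, MV)`. -/
def certLang (C : CSchema) (W : CViews C) (ds : Set (Dep C.toSchema))
    (h1 : ds.Finite) (h2 : ∀ d ∈ ds, d.ConstantFree) : Set ℕ :=
  { n | ∃ (k : ℕ) (Q : CQ C.toSchema k) (t : Fin k → ℕ) (L : List (ℕ × List ℕ)),
      n = Encodable.encode (Q.syn, List.ofFn t, L) ∧ Q.Safe ∧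
      ∃ (hg : (mvDen W L).Ground) (hf : (mvDen W L).facts.Finite),
        constTuple t ∈
          (MVSetting.mk (Frame.mk C.toSchema ds h1 h2 W.toViews) (mvDen W L) hg hf).certain
            Q.answer }

/-- The `MΣ`-conditional-containment problem, as a language: the fixed parts are a
schema, a set of dependencies, and the view definitions; the input is (an encoding
of) two CQ queries `Q₁, Q₂` of the same arity and a set of view answers `MV`, and
the yes-instances are those in which `Q₁ ⊑_{MΣ} Q₂` for the setting
`(P, Σ, V, MV)`. -/
def contLang (C : CSchema) (W : CViews C) (ds : Set (Dep C.toSchema))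
    (h1 : ds.Finite) (h2 : ∀ d ∈ ds, d.ConstantFree) : Set ℕ :=
  { n | ∃ (k : ℕ) (Q1 Q2 : CQ C.toSchema k) (L : List (ℕ × List ℕ)),
      n = Encodable.encode (Q1.syn, Q2.syn, L) ∧ Q1.Safe ∧ Q2.Safe ∧
      ∃ (hg : (mvDen W L).Ground) (hf : (mvDen W L).facts.Finite),
        (MVSetting.mk (Frame.mk C.toSchema ds h1 h2 W.toViews) (mvDen W L) hg hf).CondContained
          Q1.answer Q2.answer }



/-! ### Auxiliary lemmas -/

section Helpers

open Classical

variable {S : Schema} {k : ℕ}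

@[simp] lemma Term.subst_const' (h : ℕ → Term) (c : ℕ) :
    (Term.const c).subst h = Term.const c := rfl

@[simp] lemma Term.subst_var' (h : ℕ → Term) (x : ℕ) :
    (Term.var x).subst h = h x := rfl

@[simp] lemma Term.eval_const' (μ : ℕ → Val) (c : ℕ) :
    (Term.const c).eval μ = Val.const c := rfl

@[simp] lemma Term.eval_var' (μ : ℕ → Val) (x : ℕ) :
    (Term.var x).eval μ = μ x := rfl

lemma eval_subst (μ : ℕ → Val) (h : ℕ → Term) (u : Term) :
    (u.subst h).eval μ = u.eval (fun x => (h x).eval μ) := by cases u <;> rfl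

lemma subst_id (u : Term) : u.subst Term.var = u := by cases u <;> rfl

lemma theta_subst (h : ℕ → Term) (θ : Term → Term)
    (hc : ∀ c, θ (Term.const c) = Term.const c) (u : Term) :
    θ (u.subst h) = u.subst (fun x => θ (h x)) := by
  cases u <;> simp [Term.subst, hc]

lemma mapTerms_mapTerms (f g : Term → Term) (A : Atom S) :
    (A.mapTerms f).mapTerms g = A.mapTerms (fun u => g (f u)) := rfl

@[simp] lemma mapTerms_rel (f : Term → Term) (A : Atom S) :
    (A.mapTerms f).rel = A.rel := rfl

/-- The set of terms occurring in a list of atoms. -/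
def atomsTerms (B : List (Atom S)) : Set Term := {u | ∃ A ∈ B, ∃ j, A.args j = u}

lemma atomsTerms_finite (B : List (Atom S)) : (atomsTerms B).Finite := by
  have he : atomsTerms B = ⋃ A ∈ {A | A ∈ B}, Set.range A.args := by
    ext u
    simp only [atomsTerms, Set.mem_setOf_eq, Set.mem_iUnion, Set.mem_range]
    tauto
  rw [he]
  exact (B.finite_toSet).biUnion (fun A _ => Set.finite_range _)

lemma cqneq_terms_finite (Q : CQNeq S k) : Q.terms.Finite := by
  have he : Q.terms = Set.range Q.head ∪ atomsTerms Q.body ∪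
      ⋃ p ∈ {p | p ∈ Q.diseqs}, ({p.1, p.2} : Set Term) := by
    ext u
    simp only [CQNeq.terms, Set.mem_setOf_eq, Set.mem_union, Set.mem_range, atomsTerms,
      Set.mem_iUnion, Set.mem_insert_iff, Set.mem_singleton_iff, exists_prop]
    constructor
    · rintro (⟨i, hi⟩ | ⟨A, hA, j, hj⟩ | ⟨p, hp, (hu | hu)⟩)
      · exact Or.inl (Or.inl ⟨i, hi⟩)
      · exact Or.inl (Or.inr ⟨A, hA, j, hj⟩)
      · exact Or.inr ⟨p, hp, Or.inl hu.symm⟩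
      · exact Or.inr ⟨p, hp, Or.inr hu.symm⟩
    · rintro ((⟨i, hi⟩ | ⟨A, hA, j, hj⟩) | ⟨p, hp, (hu | hu)⟩)
      · exact Or.inl ⟨i, hi⟩
      · exact Or.inr (Or.inl ⟨A, hA, j, hj⟩)
      · exact Or.inr (Or.inr ⟨p, hp, Or.inl hu.symm⟩)
      · exact Or.inr (Or.inr ⟨p, hp, Or.inr hu.symm⟩)
  rw [he]
  exact ((Set.finite_range _).union (atomsTerms_finite _)).union
    ((Q.diseqs.finite_toSet).biUnion (fun p _ => (Set.finite_singleton _).insert _))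

/-- extraction of a bound from a finite set of terms -/
lemma exists_term_bound (Ts : Set Term) (h : Ts.Finite) :
    ∃ N, ∀ u ∈ Ts, (∀ x, u = Term.var x → x < N) ∧ (∀ c, u = Term.const c → c < N) := by
  classical
  set f : Term → ℕ := fun u => match u with | .var x => x | .const c => c with hf
  obtain ⟨N, hN⟩ := (h.image f).bddAbove
  refine ⟨N + 1, fun u hu => ⟨fun x hx => ?_, fun c hc => ?_⟩⟩
  · have : f u ≤ N := hN ⟨u, hu, rfl⟩
    subst hx; simp [hf] at this; omega
  · have : f u ≤ N := hN ⟨u, hu, rfl⟩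
    subst hc; simp [hf] at this; omega

lemma exists_var_bound (Q : CQNeq S k) : ∃ V, ∀ x, Term.var x ∈ Q.terms → x < V := by
  obtain ⟨N, hN⟩ := exists_term_bound Q.terms (cqneq_terms_finite Q)
  exact ⟨N, fun x hx => (hN _ hx).1 x rfl⟩

lemma exAtomsChild_exists (Q : CQNeq S k) (h : ℕ → Term) (av : Set ℕ) (ψ : List (Atom S)) :
    ∃ Q', exAtomsChild Q h av ψ Q' := by
  classical
  obtain ⟨V, hV⟩ := exists_var_bound Q
  refine ⟨_, fun x => if x ∈ av then h x else Term.var (V + x),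
    fun x hx => by simp [hx], fun x _ hx => ⟨V + x, by simp [hx], fun hmem => ?_⟩, ?_, rfl⟩
  · exact absurd (hV _ hmem) (by omega)
  · intro x hx y hy hxy
    simp only [if_neg hx.2, if_neg hy.2, Term.var.injEq] at hxy
    omega

end Helpers

namespace RTree

variable {β : Type}

lemma mem_leavesL {x : β} : ∀ {ts : List (RTree β)}, x ∈ leavesL ts ↔ ∃ t ∈ ts, x ∈ t.leaves
  | [] => by simp [leavesL]
  | t :: ts => by
    simp only [leavesL, List.mem_append, mem_leavesL (ts := ts), List.mem_cons]
    constructor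
    · rintro (h | ⟨t', ht', hx⟩)
      · exact ⟨t, Or.inl rfl, h⟩
      · exact ⟨t', Or.inr ht', hx⟩
    · rintro ⟨t', (rfl | ht'), hx⟩
      · exact Or.inl hx
      · exact Or.inr ⟨t', ht', hx⟩

lemma mem_leaves_node {x b : β} {ts : List (RTree β)} :
    x ∈ (node b ts).leaves ↔ (ts = [] ∧ x = b) ∨ x ∈ leavesL ts := by
  cases ts with
  | nil => simp [leaves, leavesL]
  | cons t ts => simp [leaves, leavesL]

lemma ValidL_mem {D : β → Set (Set β)} :
    ∀ {ts : List (RTree β)} {t : RTree β}, ValidL D ts → t ∈ ts → Valid D t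
  | t0 :: ts, t, h, hm => by
    rw [ValidL] at h
    rcases List.mem_cons.1 hm with rfl | hm
    · exact h.1
    · exact ValidL_mem h.2 hm

theorem valid_leaves_prop {D : β → Set (Set β)} (hne : ∀ a C, C ∈ D a → C.Nonempty)
    (P : β → Prop) (hstep : ∀ a b, P a → ∀ C ∈ D a, b ∈ C → P b) :
    ∀ t : RTree β, Valid D t → P t.label → ∀ x ∈ t.leaves, P x ∧ D x = ∅
  | node a ts => by
    intro hv hp x hx
    rw [Valid] at hv
    rcases hv with ⟨hda, hts⟩ | ⟨C, hC, hlab, hvl⟩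
    · subst hts
      rcases mem_leaves_node.1 hx with ⟨-, rfl⟩ | h
      · exact ⟨hp, hda⟩
      · simp [leavesL] at h
    · rcases mem_leaves_node.1 hx with ⟨rfl, rfl⟩ | hx'
      · exfalso
        obtain ⟨c, hc⟩ := hne _ _ hC
        rw [← hlab] at hc
        obtain ⟨t', ht', -⟩ := hc
        simp at ht'
      · obtain ⟨t', ht', hxt'⟩ := mem_leavesL.1 hx'
        have hvt' := ValidL_mem hvl ht'
        have hPl : P t'.label := hstep a _ hp C hC (by rw [← hlab]; exact ⟨t', ht', rfl⟩)
        exact valid_leaves_prop hne P hstep t' hvt' hPl x hxt'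
  termination_by t => sizeOf t
  decreasing_by
    have h1 := List.sizeOf_lt_of_mem ht'
    simp only [RTree.node.sizeOf_spec]
    omega

theorem valid_leaves_sat {D : β → Set (Set β)} (Sat : β → Prop)
    (hstep : ∀ a, Sat a → ∀ C ∈ D a, ∃ b ∈ C, Sat b) :
    ∀ t : RTree β, Valid D t → Sat t.label → ∃ x ∈ t.leaves, Sat x
  | node a ts => by
    intro hv hs
    rw [Valid] at hv
    rcases hv with ⟨hda, hts⟩ | ⟨C, hC, hlab, hvl⟩
    · subst hts
      exact ⟨a, mem_leaves_node.2 (Or.inl ⟨rfl, rfl⟩), hs⟩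
    · obtain ⟨b, hbC, hbs⟩ := hstep a hs C hC
      rw [← hlab] at hbC
      obtain ⟨t', ht', hbl⟩ := hbC
      have hvt' := ValidL_mem hvl ht'
      obtain ⟨x, hx, hxs⟩ := valid_leaves_sat Sat hstep t' hvt' (by rw [hbl]; exact hbs)
      exact ⟨x, mem_leaves_node.2 (Or.inr (mem_leavesL.2 ⟨t', ht', hx⟩)), hxs⟩
  termination_by t => sizeOf t
  decreasing_by
    have h1 := List.sizeOf_lt_of_mem ht'
    simp only [RTree.node.sizeOf_spec]
    omega

end RTree


/-! ### Position and normalization lemmas -/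

section Positions

variable {S : Schema}

lemma argsList_length (A : Atom S) : A.argsList.length = S.arity A.rel :=
  List.length_ofFn

lemma argsList_getElem (A : Atom S) (i : ℕ) (hi : i < A.argsList.length) :
    A.argsList[i] = A.args ⟨i, by simpa [argsList_length] using hi⟩ :=
  List.getElem_ofFn _

lemma atomArg?_eq (B : List (Atom S)) (j : ℕ) (hj : j < B.length) (i : ℕ) :
    atomArg? B j i = (B[j]'hj).argsList[i]? := by
  unfold atomArg?
  rw [List.getElem?_eq_getElem hj]

lemma atomArg?_eq_none (B : List (Atom S)) (j : ℕ) (hj : ¬ j < B.length) (i : ℕ) :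
    atomArg? B j i = none := by
  unfold atomArg?
  rw [List.getElem?_eq_none (le_of_not_gt hj)]

lemma atomArg?_eq_some_iff {B : List (Atom S)} {j i : ℕ} {u : Term} :
    atomArg? B j i = some u ↔
      ∃ (hj : j < B.length) (hi : i < S.arity ((B[j]'hj).rel)), (B[j]'hj).args ⟨i, hi⟩ = u := by
  by_cases hj : j < B.length
  · rw [atomArg?_eq B j hj i]
    rw [List.getElem?_eq_some_iff]
    constructor
    · rintro ⟨hi, hu⟩
      have hi2 : i < S.arity ((B[j]'hj).rel) := by rw [argsList_length] at hi; exact hi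
      refine ⟨hj, hi2, ?_⟩
      rw [argsList_getElem _ _ hi] at hu
      exact hu
    · rintro ⟨hj', hi, hu⟩
      have hi' : i < (B[j]'hj).argsList.length := by rw [argsList_length]; exact hi
      exact ⟨hi', by rw [argsList_getElem _ _ hi']; exact hu⟩
  · rw [atomArg?_eq_none B j hj i]
    constructor
    · intro h; cases h
    · rintro ⟨hj', -, -⟩; exact absurd hj' hj

lemma isDup_iff {B : List (Atom S)} {j i : ℕ} :
    isDup B j i = true ↔
      ∃ u, atomArg? B j i = some u ∧ ∃ j' i', (j' < j ∨ (j' = j ∧ i' < i)) ∧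
        atomArg? B j' i' = some u := by
  unfold isDup
  cases h : atomArg? B j i with
  | none =>
    simp only
    constructor
    · intro hf; exact absurd hf (by simp)
    · rintro ⟨u, hu, -⟩; cases hu
  | some u =>
    simp only [List.any_eq_true, List.mem_range]
    constructor
    · rintro ⟨j', hj', hp⟩
      cases hA' : B[j']? with
      | none => rw [hA'] at hp; exact absurd hp (by simp)
      | some A' =>
        rw [hA'] at hp
        simp only [List.any_eq_true, List.mem_range, Bool.and_eq_true, Bool.or_eq_true,
          decide_eq_true_eq] at hp
        obtain ⟨i', hi', hord, hsome⟩ := hp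
        refine ⟨u, rfl, j', i', by tauto, ?_⟩
        unfold atomArg?; rw [hA']; exact hsome
    · rintro ⟨u', hu', j', i', hord, hsome⟩
      have huu : u' = u := (Option.some.inj hu').symm
      subst huu
      obtain ⟨hj', hi', harg⟩ := atomArg?_eq_some_iff.1 hsome
      refine ⟨j', hj', ?_⟩
      rw [List.getElem?_eq_getElem hj']
      simp only [List.any_eq_true, List.mem_range, Bool.and_eq_true, Bool.or_eq_true,
        decide_eq_true_eq]
      have hi'' : i' < (B[j']'hj').argsList.length := by rw [argsList_length]; exact hi'
      refine ⟨i', hi'', by tauto, ?_⟩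
      exact List.getElem?_eq_some_iff.2 ⟨hi'', by rw [argsList_getElem _ _ hi'']; exact harg⟩

/-- The normalized argument at a nat position. -/
def narg (B : List (Atom S)) (j i : ℕ) : Option Term :=
  (atomArg? B j i).map (fun u => if isDup B j i then freshVar j i else u.orig)

lemma narg_eq_some_iff {B : List (Atom S)} {j i : ℕ} {w : Term} :
    narg B j i = some w ↔
      ∃ u, atomArg? B j i = some u ∧ w = if isDup B j i then freshVar j i else u.orig := by
  unfold narg
  cases h : atomArg? B j i with
  | none =>
    simp only [Option.map_none]
    constructor
    · intro hw; cases hw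
    · rintro ⟨u, hu, -⟩; cases hu
  | some u =>
    simp only [Option.map_some, Option.some.injEq]
    constructor
    · intro hw; exact ⟨u, rfl, hw.symm⟩
    · rintro ⟨u', hu', hw⟩
      cases hu'
      exact hw.symm

theorem exists_first {B : List (Atom S)} : ∀ (j i : ℕ) (u : Term),
    atomArg? B j i = some u →
    ∃ j0 i0, atomArg? B j0 i0 = some u ∧ isDup B j0 i0 = false ∧
      (j0 < j ∨ (j0 = j ∧ i0 ≤ i))
  | j, i, u, h => by
    by_cases hd : isDup B j i
    · obtain ⟨u', hu', j', i', hord, hsome⟩ := isDup_iff.1 hd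
      have huu : u' = u := by
        rw [h] at hu'; exact (Option.some.inj hu').symm
      rw [huu] at hsome
      obtain ⟨j0, i0, h0, hnd, hord0⟩ := exists_first j' i' u hsome
      refine ⟨j0, i0, h0, hnd, ?_⟩
      rcases hord0 with h1 | ⟨rfl, h2⟩ <;> rcases hord with h3 | ⟨h3, h4⟩ <;> omega
    · exact ⟨j, i, h, by simpa using hd, Or.inr ⟨rfl, le_refl _⟩⟩
  termination_by j i => (j, i)
  decreasing_by
    rcases hord with h1 | ⟨rfl, h2⟩
    · exact Prod.Lex.left _ _ h1
    · exact Prod.Lex.right _ h2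

lemma freshVar_eq_iff {j i j' i' : ℕ} : freshVar j i = freshVar j' i' ↔ j = j' ∧ i = i' := by
  unfold freshVar
  rw [Term.var.injEq]
  constructor
  · intro h
    exact Nat.pair_eq_pair.1 (by omega)
  · rintro ⟨rfl, rfl⟩; rfl

lemma narg_var_inj {B : List (Atom S)} {j i j' i' v : ℕ}
    (h1 : narg B j i = some (Term.var v)) (h2 : narg B j' i' = some (Term.var v)) :
    j = j' ∧ i = i' := by
  obtain ⟨u1, hu1, hw1⟩ := narg_eq_some_iff.1 h1
  obtain ⟨u2, hu2, hw2⟩ := narg_eq_some_iff.1 h2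
  by_cases hd1 : isDup B j i <;> by_cases hd2 : isDup B j' i'
  · rw [if_pos hd1] at hw1; rw [if_pos hd2] at hw2
    exact freshVar_eq_iff.1 (hw1.symm.trans hw2)
  · rw [if_pos hd1] at hw1; rw [if_neg hd2] at hw2
    exfalso
    cases u2 with
    | var x =>
      rw [hw2] at hw1
      unfold freshVar Term.orig at hw1
      rw [Term.var.injEq] at hw1
      omega
    | const c => rw [hw2] at hw1; simp [freshVar, Term.orig] at hw1
  · rw [if_neg hd1] at hw1; rw [if_pos hd2] at hw2
    exfalso
    cases u1 with
    | var x =>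
      rw [hw1] at hw2
      unfold freshVar Term.orig at hw2
      rw [Term.var.injEq] at hw2
      omega
    | const c => rw [hw1] at hw2; simp [freshVar, Term.orig] at hw2
  · rw [if_neg hd1] at hw1; rw [if_neg hd2] at hw2
    cases u1 with
    | const c => simp [Term.orig] at hw1
    | var x =>
      cases u2 with
      | const c' => simp [Term.orig] at hw2
      | var x' =>
        have hxx : x = x' := by
          rw [hw1] at hw2
          unfold Term.orig at hw2
          rw [Term.var.injEq] at hw2
          omega
        subst hxx
        by_contra hne
        have hcases : (j' < j ∨ (j' = j ∧ i' < i)) ∨ (j < j' ∨ (j = j' ∧ i < i')) := by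
          by_cases hj : j = j'
          · subst hj
            have : i ≠ i' := fun h => hne ⟨rfl, h⟩
            omega
          · omega
        rcases hcases with hlt | hlt
        · exact absurd (isDup_iff.2 ⟨Term.var x, hu1, j', i', hlt, hu2⟩) (by simpa using hd1)
        · exact absurd (isDup_iff.2 ⟨Term.var x, hu2, j, i, by tauto, hu1⟩) (by simpa using hd2)

lemma normAtom_rel {B : List (Atom S)} {j : ℕ} {A : Atom S} :
    (normAtom B j A).rel = A.rel := rfl

lemma normBody_length (B : List (Atom S)) : (normBody B).length = B.length := by
  simp [normBody]

lemma normBody_getElem (B : List (Atom S)) (j : ℕ) (hj : j < B.length) :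
    (normBody B)[j]'(by rwa [normBody_length]) = normAtom B j (B[j]'hj) := by
  simp [normBody]

lemma mem_normBody_iff {B : List (Atom S)} {A' : Atom S} :
    A' ∈ normBody B ↔ ∃ (j : ℕ) (hj : j < B.length), A' = normAtom B j (B[j]'hj) := by
  constructor
  · intro h
    obtain ⟨j, hj, heq⟩ := List.mem_iff_getElem.1 h
    rw [normBody_length] at hj
    exact ⟨j, hj, by rw [← heq, normBody_getElem _ _ hj]⟩
  · rintro ⟨j, hj, rfl⟩
    rw [← normBody_getElem _ _ hj]
    exact List.getElem_mem _

lemma atomArg?_normBody (B : List (Atom S)) (j i : ℕ) :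
    atomArg? (normBody B) j i = narg B j i := by
  by_cases hj : j < B.length
  · by_cases hi : i < S.arity ((B[j]'hj).rel)
    · have h1 : atomArg? B j i = some ((B[j]'hj).args ⟨i, hi⟩) :=
        atomArg?_eq_some_iff.2 ⟨hj, hi, rfl⟩
      have h2 : atomArg? (normBody B) j i =
          some ((normAtom B j (B[j]'hj)).args ⟨i, hi⟩) := by
        refine atomArg?_eq_some_iff.2 ⟨by rwa [normBody_length], ?_⟩
        rw [normBody_getElem _ _ hj]
        exact ⟨hi, rfl⟩
      rw [h2]
      unfold narg
      rw [h1]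
      simp only [Option.map_some]
      rfl
    · have h1 : atomArg? B j i = none := by
        cases h : atomArg? B j i with
        | none => rfl
        | some u =>
          obtain ⟨hj', hi', -⟩ := atomArg?_eq_some_iff.1 h
          exact absurd hi' hi
      have h2 : atomArg? (normBody B) j i = none := by
        cases h : atomArg? (normBody B) j i with
        | none => rfl
        | some u =>
          obtain ⟨hj', hi', -⟩ := atomArg?_eq_some_iff.1 h
          rw [normBody_getElem _ _ hj] at hi'
          exact absurd hi' hi
      rw [h2]
      unfold narg
      rw [h1]
      rfl
  · have h1 : atomArg? B j i = none := by
      cases h : atomArg? B j i with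
      | none => rfl
      | some u =>
        obtain ⟨hj', -, -⟩ := atomArg?_eq_some_iff.1 h
        exact absurd hj' hj
    have h2 : atomArg? (normBody B) j i = none := by
      cases h : atomArg? (normBody B) j i with
      | none => rfl
      | some u =>
        obtain ⟨hj', -, -⟩ := atomArg?_eq_some_iff.1 h
        rw [normBody_length] at hj'
        exact absurd hj' hj
    rw [h2]
    unfold narg
    rw [h1]
    rfl

lemma mem_bodyVars_iff {B : List (Atom S)} {x : ℕ} :
    x ∈ BodyVars B ↔ ∃ j i, atomArg? B j i = some (Term.var x) := by
  constructor
  · rintro ⟨A, hA, jf, hj⟩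
    obtain ⟨j, hjl, hBj⟩ := List.mem_iff_getElem.1 hA
    refine ⟨j, (jf : ℕ), atomArg?_eq_some_iff.2 ⟨hjl, ?_⟩⟩
    rw [hBj]
    exact ⟨jf.isLt, by rw [Fin.eta]; exact hj⟩
  · rintro ⟨j, i, h⟩
    obtain ⟨hj, hi, harg⟩ := atomArg?_eq_some_iff.1 h
    exact ⟨B[j]'hj, List.getElem_mem _, ⟨i, hi⟩, harg⟩

lemma mem_bodyVars_normBody_iff {B : List (Atom S)} {x : ℕ} :
    x ∈ BodyVars (normBody B) ↔ ∃ j i, narg B j i = some (Term.var x) := by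
  rw [mem_bodyVars_iff]
  constructor
  · rintro ⟨j, i, h⟩; exact ⟨j, i, by rwa [atomArg?_normBody] at h⟩
  · rintro ⟨j, i, h⟩; exact ⟨j, i, by rwa [atomArg?_normBody]⟩

lemma mem_swapZipIdx {α : Type*} {l : List α} {j : ℕ} {a : α} :
    (j, a) ∈ l.zipIdx.map Prod.swap ↔ l[j]? = some a := by
  constructor
  · intro hm
    obtain ⟨⟨a', j'⟩, h, he⟩ := List.mem_map.1 hm
    simp only [Prod.swap_prod_mk, Prod.mk.injEq] at he
    obtain ⟨rfl, rfl⟩ := he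
    exact List.mem_zipIdx_iff_getElem?.1 h
  · intro h
    exact List.mem_map.2 ⟨(a, j), List.mem_zipIdx_iff_getElem?.2 h, rfl⟩

lemma mem_normEqs_iff {B : List (Atom S)} {p : Term × Term} :
    p ∈ normEqs B ↔ ∃ j i u, atomArg? B j i = some u ∧ isDup B j i = true ∧
      p = (freshVar j i, u.orig) := by
  unfold normEqs
  rw [List.mem_flatten]
  constructor
  · rintro ⟨l, hl, hp⟩
    rw [List.mem_map] at hl
    obtain ⟨⟨j, A⟩, hmem, rfl⟩ := hl
    rw [mem_swapZipIdx] at hmem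
    rw [List.mem_filterMap] at hp
    obtain ⟨⟨i, u⟩, hq, hif⟩ := hp
    rw [mem_swapZipIdx] at hq
    by_cases hd : isDup B j i
    · rw [if_pos hd] at hif
      cases hif
      refine ⟨j, i, u, ?_, hd, rfl⟩
      unfold atomArg?; rw [hmem]; exact hq
    · rw [if_neg hd] at hif; cases hif
  · rintro ⟨j, i, u, hsome, hd, rfl⟩
    obtain ⟨hj, hi, harg⟩ := atomArg?_eq_some_iff.1 hsome
    refine ⟨_, List.mem_map.2 ⟨(j, B[j]'hj),
      mem_swapZipIdx.2 (by simp [List.getElem?_eq_getElem hj]), rfl⟩, ?_⟩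
    rw [List.mem_filterMap]
    have hi' : i < (B[j]'hj).argsList.length := by rw [argsList_length]; exact hi
    refine ⟨(i, u), mem_swapZipIdx.2 ?_, by simp [hd]⟩
    refine List.getElem?_eq_some_iff.2 ⟨hi', ?_⟩
    rw [argsList_getElem _ _ hi']
    exact harg

end Positions


/-! ### Semantic lemmas about normalization -/

section NormSem

variable {S : Schema} {k : ℕ}

lemma orig_subst_eval (h : ℕ → Term) (μ : ℕ → Val) (u : Term) :
    ((u.orig).subst h).eval μ = u.eval (fun x => (h (2 * x)).eval μ) := by
  cases u <;> rfl

lemma atomsTerms_subset_terms (Q : CQNeq S k) : atomsTerms Q.body ⊆ Q.terms := by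
  rintro u ⟨A, hA, j, hj⟩
  exact Or.inr (Or.inl ⟨A, hA, j, hj⟩)

/-- Injectivity of freezing on "small" terms. -/
lemma freeze_inj {W : ℕ} {u1 u2 : Term}
    (h1 : ∀ c, u1 = Term.const c → c < W) (h2 : ∀ c, u2 = Term.const c → c < W)
    (he : u1.eval (fun x => Val.const (x + W)) = u2.eval (fun x => Val.const (x + W))) :
    u1 = u2 := by
  cases u1 with
  | var x =>
    cases u2 with
    | var y =>
      simp only [Term.eval, Val.const.injEq] at he
      rw [Term.var.injEq]
      omega
    | const c =>
      simp only [Term.eval, Val.const.injEq] at he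
      have := h2 c rfl
      omega
  | const c =>
    cases u2 with
    | var y =>
      simp only [Term.eval, Val.const.injEq] at he
      have := h1 c rfl
      omega
    | const c' =>
      simp only [Term.eval, Val.const.injEq] at he
      rw [he]

/-- Soundness of normalized triggers: if all the equations of the normalization
evaluate equally, the composed valuation satisfies the original body. -/
lemma norm_eval_body {B : List (Atom S)} {Q : CQNeq S k} {I : Inst S}
    (μ : ℕ → Val) (h : ℕ → Term)
    (hhom : homTo h (normBody B) Q)
    (hQ : BodyHolds μ Q.body I)
    (heqs : ∀ p ∈ normEqs B, (p.1.subst h).eval μ = (p.2.subst h).eval μ) :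
    BodyHolds (fun x => (h (2 * x)).eval μ) B I := by
  intro A hA
  obtain ⟨j, hj, hBj⟩ := List.mem_iff_getElem.1 hA
  have hmem : (normAtom B j (B[j]'hj)).mapTerms (Term.subst h) ∈ Q.body :=
    hhom _ (mem_normBody_iff.2 ⟨j, hj, rfl⟩)
  have hf := hQ _ hmem
  have hfe : (fun i => (((normAtom B j (B[j]'hj)).mapTerms (Term.subst h)).args i).eval μ) =
      (fun i => ((B[j]'hj).args i).eval (fun x => (h (2 * x)).eval μ)) := by
    funext i
    show ((Term.subst h (if isDup B j ((i : ℕ)) then freshVar j (i : ℕ)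
      else (((B[j]'hj).args i).orig))).eval μ) = _
    by_cases hd : isDup B j ((i : ℕ))
    · rw [if_pos hd]
      have hp : (freshVar j (i : ℕ), ((B[j]'hj).args i).orig) ∈ normEqs B := by
        refine mem_normEqs_iff.2 ⟨j, (i : ℕ), (B[j]'hj).args i, ?_, hd, rfl⟩
        exact atomArg?_eq_some_iff.2 ⟨hj, i.isLt, rfl⟩
      have := heqs _ hp
      simp only at this
      rw [this]
      exact orig_subst_eval h μ _
    · rw [if_neg hd]
      exact orig_subst_eval h μ _
  rw [hfe] at hf
  rw [← hBj]
  exact hf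

/-- Inversion of membership in a frozen instance. -/
lemma frozen_mem_inv {body : List (Atom S)} {fz : ℕ → Val} {r : S.rel}
    {t : Fin (S.arity r) → Val}
    (ht : t ∈ (Inst.ofFacts (factSet body fz)).rels r) :
    ∃ args' : Fin (S.arity r) → Term, (⟨r, args'⟩ : Atom S) ∈ body ∧
      ∀ i, (args' i).eval fz = t i := by
  obtain ⟨A, hA, heq⟩ := ht
  cases A with
  | mk Ar Aargs =>
    obtain ⟨hr, hh⟩ := Sigma.mk.inj_iff.1 heq
    subst hr
    refine ⟨Aargs, hA, fun i => ?_⟩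
    rw [eq_of_heq hh]

/-- The main trigger-lifting lemma: a valuation of a body `B` into the frozen
instance of `Ql` lifts to a query-level trigger of the normalized body. -/
lemma lift_trigger (Ql : CQNeq S k) (W : ℕ)
    (hWc : ∀ c, Term.const c ∈ Ql.terms → c < W)
    (B : List (Atom S))
    (hBc : ∀ c, (∃ A ∈ B, ∃ j, A.args j = Term.const c) → c < W)
    (g : ℕ → Val)
    (hg : BodyHolds g B (Inst.ofFacts (factSet Ql.body (fun x => Val.const (x + W))))) :
    ∃ h : ℕ → Term,
      homTo h (normBody B) Ql ∧
      (∀ x ∈ BodyVars B, (h (2 * x)).eval (fun x => Val.const (x + W)) = g x) ∧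
      (∀ p ∈ normEqs B, p.1.subst h = p.2.subst h) ∧
      (∀ x, (¬ ∃ j i, narg B j i = some (Term.var x)) → h x = Term.var (W + x)) ∧
      (∀ x, (∃ j i, narg B j i = some (Term.var x)) → h x ∈ atomsTerms Ql.body) := by
  classical
  set fz : ℕ → Val := (fun x => Val.const (x + W)) with hfz
  -- choose preimage atoms in Ql for every atom of B
  have hpre : ∀ (j : ℕ) (hj : j < B.length),
      ∃ args' : Fin (S.arity ((B[j]'hj).rel)) → Term,
        (⟨(B[j]'hj).rel, args'⟩ : Atom S) ∈ Ql.body ∧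
        ∀ i, (args' i).eval fz = ((B[j]'hj).args i).eval g := by
    intro j hj
    exact frozen_mem_inv (hg (B[j]'hj) (List.getElem_mem _))
  choose args' hmem heval using hpre
  -- smallness of chosen terms
  have hsmall : ∀ (j : ℕ) (hj : j < B.length) (i : Fin (S.arity ((B[j]'hj).rel))),
      ∀ c, args' j hj i = Term.const c → c < W := by
    intro j hj i c hc
    exact hWc c (atomsTerms_subset_terms Ql (by rw [← hc]; exact ⟨_, hmem j hj, i, rfl⟩))
  -- define the trigger
  have hchoice : ∀ x : ℕ, ∃ u : Term,
      (∀ j i, narg B j i = some (Term.var x) →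
        ∃ (hj : j < B.length) (hi : i < S.arity ((B[j]'hj).rel)), u = args' j hj ⟨i, hi⟩) ∧
      ((¬ ∃ j i, narg B j i = some (Term.var x)) → u = Term.var (W + x)) := by
    intro x
    by_cases hx : ∃ j i, narg B j i = some (Term.var x)
    · obtain ⟨j0, i0, hn0⟩ := hx
      obtain ⟨u0, hu0⟩ := narg_eq_some_iff.1 hn0
      obtain ⟨hj0, hi0, -⟩ := atomArg?_eq_some_iff.1 hu0.1
      refine ⟨args' j0 hj0 ⟨i0, hi0⟩, fun j i hn => ?_, fun hc => absurd ⟨j0, i0, hn0⟩ hc⟩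
      obtain ⟨rfl, rfl⟩ := narg_var_inj hn hn0
      exact ⟨hj0, hi0, rfl⟩
    · exact ⟨Term.var (W + x), fun j i hn => absurd ⟨j, i, hn⟩ hx, fun _ => rfl⟩
  choose h hh1 hh2 using hchoice
  -- key equations
  have hkey : ∀ (j i : ℕ) (hj : j < B.length) (hi : i < S.arity ((B[j]'hj).rel)) (x : ℕ),
      narg B j i = some (Term.var x) → h x = args' j hj ⟨i, hi⟩ := by
    intro j i hj hi x hn
    obtain ⟨hj', hi', he⟩ := hh1 x j i hn
    exact he
  have hargeq : ∀ (j i : ℕ) (hj : j < B.length) (hi : i < S.arity ((B[j]'hj).rel)),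
      Term.subst h (if isDup B j i then freshVar j i else ((B[j]'hj).args ⟨i, hi⟩).orig) =
        args' j hj ⟨i, hi⟩ := by
    intro j i hj hi
    have hsome : atomArg? B j i = some ((B[j]'hj).args ⟨i, hi⟩) :=
      atomArg?_eq_some_iff.2 ⟨hj, hi, rfl⟩
    by_cases hd : isDup B j i
    · rw [if_pos hd]
      have hn : narg B j i = some (freshVar j i) := by
        unfold narg; rw [hsome, Option.map_some, if_pos hd]
      unfold freshVar
      exact hkey j i hj hi _ (by rw [hn]; rfl)
    · rw [if_neg hd]
      cases harg : (B[j]'hj).args ⟨i, hi⟩ with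
      | var y =>
        have hn : narg B j i = some (Term.var (2 * y)) := by
          unfold narg; rw [hsome, Option.map_some, if_neg hd, harg]; rfl
        exact hkey j i hj hi _ hn
      | const c =>
        show Term.const c = args' j hj ⟨i, hi⟩
        have hcW : c < W := hBc c ⟨B[j]'hj, List.getElem_mem _, ⟨i, hi⟩, harg⟩
        have hev : (args' j hj ⟨i, hi⟩).eval fz = Val.const c := by
          rw [heval j hj ⟨i, hi⟩, harg]; rfl
        refine freeze_inj (fun c' hc' => Term.const.inj hc' ▸ hcW)
          (hsmall j hj ⟨i, hi⟩) ?_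
        exact hev.symm
  refine ⟨h, ?_, ?_, ?_, fun x hx => hh2 x hx, ?_⟩
  · -- homTo
    intro A' hA'
    obtain ⟨j, hj, rfl⟩ := mem_normBody_iff.1 hA'
    have harg : (fun i => Term.subst h ((normAtom B j (B[j]'hj)).args i)) = args' j hj := by
      funext i
      have := hargeq j (i : ℕ) hj i.isLt
      exact this
    have hAeq : (normAtom B j (B[j]'hj)).mapTerms (Term.subst h) =
        (⟨(B[j]'hj).rel, args' j hj⟩ : Atom S) := by
      calc (normAtom B j (B[j]'hj)).mapTerms (Term.subst h)
          = ⟨(B[j]'hj).rel, fun i => Term.subst h ((normAtom B j (B[j]'hj)).args i)⟩ := rfl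
        _ = ⟨(B[j]'hj).rel, args' j hj⟩ :=
            congrArg (fun f => (⟨(B[j]'hj).rel, f⟩ : Atom S)) harg
    rw [hAeq]
    exact hmem j hj
  · -- evaluation of body variables
    intro x hx
    obtain ⟨j, i, hsome⟩ := mem_bodyVars_iff.1 hx
    obtain ⟨j0, i0, hsome0, hnd, -⟩ := exists_first j i _ hsome
    obtain ⟨hj0, hi0, harg0⟩ := atomArg?_eq_some_iff.1 hsome0
    have hn0 : narg B j0 i0 = some (Term.var (2 * x)) := by
      unfold narg
      rw [hsome0, Option.map_some, if_neg (by simp [hnd])]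
      rfl
    rw [hkey j0 i0 hj0 hi0 _ hn0, heval j0 hj0 ⟨i0, hi0⟩, harg0]
    rfl
  · -- the normalization equations hold as term equalities
    intro p hp
    obtain ⟨j, i, u, hsome, hd, rfl⟩ := mem_normEqs_iff.1 hp
    obtain ⟨hj, hi, harg⟩ := atomArg?_eq_some_iff.1 hsome
    have hn : narg B j i = some (freshVar j i) := by
      unfold narg; rw [hsome, Option.map_some, if_pos hd]
    have h1 : (freshVar j i).subst h = args' j hj ⟨i, hi⟩ := by
      show Term.subst h (freshVar j i) = _
      unfold freshVar
      exact hkey j i hj hi _ (by rw [hn]; rfl)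
    have hev1 : ((freshVar j i).subst h).eval fz = u.eval g := by
      rw [h1, heval j hj ⟨i, hi⟩, harg]
    cases u with
    | var x =>
      obtain ⟨j0, i0, hsome0, hnd, -⟩ := exists_first j i _ hsome
      obtain ⟨hj0, hi0, harg0⟩ := atomArg?_eq_some_iff.1 hsome0
      have hn0 : narg B j0 i0 = some (Term.var (2 * x)) := by
        unfold narg
        rw [hsome0, Option.map_some, if_neg (by simp [hnd])]
        rfl
      have h2 : (Term.var x).orig.subst h = args' j0 hj0 ⟨i0, hi0⟩ := by
        show Term.subst h (Term.var (2 * x)) = _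
        exact hkey j0 i0 hj0 hi0 _ hn0
      have hev2 : ((Term.var x).orig.subst h).eval fz = (Term.var x).eval g := by
        rw [h2, heval j0 hj0 ⟨i0, hi0⟩, harg0]
      simp only
      refine freeze_inj (W := W) ?_ ?_ (by rw [← hfz, hev1, hev2])
      · rw [h1]; exact hsmall j hj ⟨i, hi⟩
      · rw [h2]; exact hsmall j0 hj0 ⟨i0, hi0⟩
    | const c =>
      simp only
      have hcW : c < W := hBc c ⟨B[j]'hj, List.getElem_mem _, ⟨i, hi⟩, harg⟩
      have h2 : (Term.const c).orig.subst h = Term.const c := rfl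
      refine freeze_inj (W := W) ?_ ?_ ?_
      · rw [h1]; exact hsmall j hj ⟨i, hi⟩
      · rw [h2]; exact fun c' hc' => Term.const.inj hc' ▸ hcW
      · rw [← hfz, hev1, h2]; rfl
  · -- image of used variables
    intro x hx
    obtain ⟨j, i, hn⟩ := hx
    obtain ⟨hj', hi', he⟩ := hh1 x j i hn
    rw [he]
    exact ⟨_, hmem j hj', ⟨i, hi'⟩, rfl⟩

end NormSem


/-! ### Satisfiability preservation along chase steps -/

section StepSat

variable {S : Schema} {k : ℕ}

lemma hasDiseq_false {Q : CQNeq S k} {μ : ℕ → Val}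
    (hd : ∀ p ∈ Q.diseqs, p.1.eval μ ≠ p.2.eval μ) {a b : Term}
    (he : a.eval μ = b.eval μ) : ¬ Q.hasDiseq a b := by
  rintro (hab | hba)
  · exact hd _ hab he
  · exact hd _ hba he.symm

lemma mapTerms_sat {Q : CQNeq S k} {I : Inst S} {t : Fin k → Val} {μ : ℕ → Val}
    (hb : BodyHolds μ Q.body I) (hdq : ∀ p ∈ Q.diseqs, p.1.eval μ ≠ p.2.eval μ)
    (hh : t = fun i => (Q.head i).eval μ)
    (θ : Term → Term) (hevθ : ∀ u, (θ u).eval μ = u.eval μ) :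
    t ∈ (Q.mapTerms θ).answer I := by
  refine ⟨μ, ?_, ?_, ?_⟩
  · intro A' hA'
    obtain ⟨A, hA, rfl⟩ := List.mem_map.1 hA'
    have : (fun i => ((A.mapTerms θ).args i).eval μ) = (fun i => (A.args i).eval μ) := by
      funext i
      exact hevθ _
    rw [this]
    exact hb A hA
  · intro p hp
    obtain ⟨q, hq, rfl⟩ := List.mem_map.1 hp
    simp only [hevθ]
    exact hdq q hq
  · rw [hh]
    funext i
    exact (hevθ _).symm

lemma neqChild_sat {Q : CQNeq S k} {I : Inst S} {t : Fin k → Val} {μ : ℕ → Val}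
    (hb : BodyHolds μ Q.body I) (hdq : ∀ p ∈ Q.diseqs, p.1.eval μ ≠ p.2.eval μ)
    (hh : t = fun i => (Q.head i).eval μ)
    {h : ℕ → Term} {a b : Term}
    (hne : (a.subst h).eval μ ≠ (b.subst h).eval μ) :
    ∃ Q', neqChild Q h a b Q' ∧ t ∈ Q'.answer I := by
  refine ⟨⟨Q.head, Q.body, Q.diseqs ++ [(a.subst h, b.subst h)]⟩,
    ⟨fun he => hne (by rw [he]), rfl⟩, μ, hb, ?_, hh⟩
  intro p hp
  rcases List.mem_append.1 hp with hp | hp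
  · exact hdq p hp
  · rcases List.mem_singleton.1 hp with rfl
    exact hne

lemma eqsChild_exists_single {Q : CQNeq S k} (h : ℕ → Term) (p : Term × Term) (μ : ℕ → Val)
    (hdq : ∀ q ∈ Q.diseqs, q.1.eval μ ≠ q.2.eval μ)
    (he : (p.1.subst h).eval μ = (p.2.subst h).eval μ) :
    ∃ Q' θ, eqsChild Q h [p] Q' ∧ Q' = Q.mapTerms θ ∧ (∀ u, (θ u).eval μ = u.eval μ) := by
  classical
  set a := p.1.subst h with ha
  set b := p.2.subst h with hb
  have hnd : ∀ q ∈ [p], ¬ Q.hasDiseq (q.1.subst h) (q.2.subst h) := by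
    intro q hq
    rcases List.mem_singleton.1 hq with rfl
    exact hasDiseq_false hdq he
  by_cases hab : a = b
  · refine ⟨Q.mapTerms id, id, ⟨hnd, id, fun c => rfl, fun u _ => rfl,
      fun q hq => by rcases List.mem_singleton.1 hq with rfl; rw [← ha, ← hb, hab],
      fun u => Or.inl rfl, rfl⟩, rfl, fun u => rfl⟩
  · have hvar : (∃ x, a = Term.var x) ∨ (∃ x, b = Term.var x) := by
      cases hca : a with
      | var x => exact Or.inl ⟨x, rfl⟩
      | const c =>
        cases hcb : b with
        | var y => exact Or.inr ⟨y, rfl⟩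
        | const c' =>
          exfalso
          rw [hca, hcb] at he
          simp only [Term.eval, Val.const.injEq] at he
          exact hab (by rw [hca, hcb, he])
    rcases hvar with ⟨x, hx⟩ | ⟨x, hx⟩
    · -- a is a variable: map a to b
      set θ : Term → Term := fun u => if u = a then b else u with hθ
      have hθc : ∀ c, θ (Term.const c) = Term.const c := by
        intro c
        have : Term.const c ≠ a := by rw [hx]; intro hc; cases hc
        simp [hθ, this]
      have hev : ∀ u, (θ u).eval μ = u.eval μ := by
        intro u
        by_cases hu : u = a
        · simp [hθ, hu, ← he]
        · simp [hθ, hu]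
      refine ⟨Q.mapTerms θ, θ, ⟨hnd, θ, hθc, ?_, ?_, ?_, rfl⟩, rfl, hev⟩
      · intro u hu
        have h1 := (hu p (List.mem_singleton.2 rfl)).1
        simp [hθ, ha, h1]
      · intro q hq
        rcases List.mem_singleton.1 hq with rfl
        show θ a = θ b
        have hba : b ≠ a := fun hc => hab hc.symm
        simp [hθ, hba]
      · intro u
        by_cases hu : u = a
        · exact Or.inr ⟨p, List.mem_singleton.2 rfl, by rw [hu]⟩
        · exact Or.inl (by simp [hθ, hu])
    · -- b is a variable: map b to a
      set θ : Term → Term := fun u => if u = b then a else u with hθ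
      have hθc : ∀ c, θ (Term.const c) = Term.const c := by
        intro c
        have : Term.const c ≠ b := by rw [hx]; intro hc; cases hc
        simp [hθ, this]
      have hev : ∀ u, (θ u).eval μ = u.eval μ := by
        intro u
        by_cases hu : u = b
        · simp [hθ, hu, he]
        · simp [hθ, hu]
      refine ⟨Q.mapTerms θ, θ, ⟨hnd, θ, hθc, ?_, ?_, ?_, rfl⟩, rfl, hev⟩
      · intro u hu
        have h1 := (hu p (List.mem_singleton.2 rfl)).2
        simp [hθ, hb, h1]
      · intro q hq
        rcases List.mem_singleton.1 hq with rfl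
        show θ a = θ b
        simp [hθ, hab]
      · intro u
        by_cases hu : u = b
        · refine Or.inr ⟨p, List.mem_singleton.2 rfl, ?_⟩
          show θ u = θ a
          simp [hθ, hu, hab]
        · exact Or.inl (by simp [hθ, hu])

lemma eqsChild_exists_consts {Q : CQNeq S k} (h : ℕ → Term) (L : List (Term × Term))
    (μ : ℕ → Val)
    (hdq : ∀ q ∈ Q.diseqs, q.1.eval μ ≠ q.2.eval μ)
    (he : ∀ p ∈ L, (p.1.subst h).eval μ = (p.2.subst h).eval μ)
    (hc : ∀ p ∈ L, ∃ c, p.2.subst h = Term.const c) :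
    ∃ Q' θ, eqsChild Q h L Q' ∧ Q' = Q.mapTerms θ ∧ (∀ u, (θ u).eval μ = u.eval μ) := by
  classical
  -- determinacy: equal lhs evaluations give equal (constant) rhs
  have hdet : ∀ p q, p ∈ L → q ∈ L → (p.1.subst h).eval μ = (q.1.subst h).eval μ →
      p.2.subst h = q.2.subst h := by
    intro p q hp hq hpq
    obtain ⟨c, hcp⟩ := hc p hp
    obtain ⟨c', hcq⟩ := hc q hq
    rw [hcp, hcq]
    have : Val.const c = Val.const c' := by
      rw [show Val.const c = (p.1.subst h).eval μ by rw [he p hp, hcp]; rfl,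
        show Val.const c' = (q.1.subst h).eval μ by rw [he q hq, hcq]; rfl, hpq]
    cases this
    rfl
  let P : Term → Prop := fun u => ∃ p, p ∈ L ∧ u = p.1.subst h
  have hPdec : ∀ u, Decidable (P u) := fun u => Classical.propDecidable _
  set θ : Term → Term := fun u =>
    @dite _ (P u) (hPdec u) (fun hx => (Classical.choose hx).2.subst h) (fun _ => u) with hθ
  have hθspec : ∀ u (hx : P u),
      ∃ p, p ∈ L ∧ u = p.1.subst h ∧ θ u = p.2.subst h := by
    intro u hx
    obtain ⟨hp, hup⟩ := Classical.choose_spec hx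
    refine ⟨Classical.choose hx, hp, hup, ?_⟩
    show @dite _ (P u) (hPdec u) (fun hx => (Classical.choose hx).2.subst h) (fun _ => u) =
      (Classical.choose hx).2.subst h
    rw [dif_pos hx]
  have hθid : ∀ u, ¬ P u → θ u = u := by
    intro u hx
    show @dite _ (P u) (hPdec u) (fun hx => (Classical.choose hx).2.subst h) (fun _ => u) = u
    rw [dif_neg hx]
  have hev : ∀ u, (θ u).eval μ = u.eval μ := by
    intro u
    by_cases hx : P u
    · obtain ⟨p, hp, hup, hθu⟩ := hθspec u hx
      rw [hθu, ← he p hp, ← hup]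
    · rw [hθid u hx]
  have hθconsts : ∀ c, θ (Term.const c) = Term.const c := by
    intro c
    by_cases hx : P (Term.const c)
    · obtain ⟨p, hp, hup, hθu⟩ := hθspec _ hx
      obtain ⟨c', hcp⟩ := hc p hp
      rw [hθu, hcp]
      have : Val.const c' = Val.const c := by
        rw [show Val.const c' = (p.2.subst h).eval μ by rw [hcp]; rfl, ← he p hp, ← hup]
        rfl
      cases this
      rfl
    · exact hθid _ hx
  have hθrhs : ∀ p ∈ L, θ (p.2.subst h) = p.2.subst h := by
    intro p hp
    obtain ⟨c, hcp⟩ := hc p hp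
    rw [hcp, hθconsts]
  refine ⟨Q.mapTerms θ, θ, ⟨?_, θ, hθconsts, ?_, ?_, ?_, rfl⟩, rfl, hev⟩
  · intro p hp
    exact hasDiseq_false hdq (he p hp)
  · intro u hu
    refine hθid u ?_
    rintro ⟨p, hp, hup⟩
    exact (hu p hp).1 hup
  · intro p hp
    rw [hθrhs p hp]
    obtain ⟨q, hq, hup, hθu⟩ := hθspec (p.1.subst h) ⟨p, hp, rfl⟩
    rw [hθu]
    exact (hdet q p hq hp (by rw [← hup])).symm ▸ rfl
  · intro u
    by_cases hx : P u
    · obtain ⟨p, hp, hup, hθu⟩ := hθspec u hx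
      refine Or.inr ⟨p, hp, ?_⟩
      rw [hθu]
      obtain ⟨q, hq, hup', hθu'⟩ := hθspec (p.1.subst h) ⟨p, hp, rfl⟩
      rw [hθu']
      exact hdet p q hp hq (by rw [← hup'])
    · exact Or.inl (hθid u hx)

lemma homTo_var_small {Q : CQNeq S k} {B : List (Atom S)} {h : ℕ → Term}
    (hhom : homTo h (normBody B) Q) :
    ∀ x ∈ BodyVars (normBody B), h x ∈ atomsTerms Q.body := by
  intro x hx
  obtain ⟨j, i, hn⟩ := mem_bodyVars_normBody_iff.1 hx
  obtain ⟨u, hsome, hif⟩ := narg_eq_some_iff.1 hn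
  obtain ⟨hj, hi, harg⟩ := atomArg?_eq_some_iff.1 hsome
  have hmem := hhom _ (mem_normBody_iff.2 ⟨j, hj, rfl⟩)
  refine ⟨_, hmem, ⟨i, hi⟩, ?_⟩
  show Term.subst h ((normAtom B j (B[j]'hj)).args ⟨i, hi⟩) = h x
  have hval : (normAtom B j (B[j]'hj)).args ⟨i, hi⟩ = Term.var x := by
    show (if isDup B j i then freshVar j i else ((B[j]'hj).args ⟨i, hi⟩).orig) = Term.var x
    rw [harg]
    exact hif.symm
  rw [hval]
  rfl

lemma normBody_even_var {B : List (Atom S)} {y : ℕ}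
    (h : 2 * y ∈ BodyVars (normBody B)) : y ∈ BodyVars B := by
  obtain ⟨j, i, hn⟩ := mem_bodyVars_normBody_iff.1 h
  obtain ⟨u, hsome, hif⟩ := narg_eq_some_iff.1 hn
  by_cases hd : isDup B j i
  · rw [if_pos hd] at hif
    exfalso
    unfold freshVar at hif
    rw [Term.var.injEq] at hif
    omega
  · rw [if_neg hd] at hif
    cases u with
    | const c => simp [Term.orig] at hif
    | var x =>
      have hxy : y = x := by
        simp only [Term.orig, Term.var.injEq] at hif
        omega
      subst hxy
      exact mem_bodyVars_iff.2 ⟨j, i, hsome⟩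

lemma eval_eq_of_small {V : ℕ} {μ μ' : ℕ → Val} (hagree : ∀ z, z < V → μ' z = μ z)
    {u : Term} (hu : ∀ z, u = Term.var z → z < V) : u.eval μ' = u.eval μ := by
  cases u with
  | var z => exact hagree z (hu z rfl)
  | const c => rfl

lemma exAtoms_step_sat {Q : CQNeq S k} {I : Inst S} {t : Fin k → Val} {μ : ℕ → Val}
    (hb : BodyHolds μ Q.body I) (hdq : ∀ p ∈ Q.diseqs, p.1.eval μ ≠ p.2.eval μ)
    (hh : t = fun i => (Q.head i).eval μ)
    {σ : TGD S} (hcf : ∀ A ∈ σ.head, A.ConstantFree)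
    {h : ℕ → Term} (hhom : homTo h (normBody σ.body) Q)
    (ν' : ℕ → Val) (hag : ∀ x ∈ BodyVars σ.body, ν' x = (h (2 * x)).eval μ)
    (hheadI : BodyHolds ν' σ.head I) :
    ∃ Q', exAtomsChild Q h (BodyVars (normBody σ.body)) (σ.head.map Atom.orig) Q' ∧
      t ∈ Q'.answer I := by
  classical
  obtain ⟨V, hV⟩ := exists_var_bound Q
  set av : Set ℕ := BodyVars (normBody σ.body) with hav
  set h' : ℕ → Term := fun x => if x ∈ av then h x else Term.var (V + x) with hh'
  set μ' : ℕ → Val := fun z => if z < V then μ z else ν' ((z - V) / 2) with hμ'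
  have hagree : ∀ z, z < V → μ' z = μ z := fun z hz => by simp [hμ', hz]
  have hsmallQ : ∀ u, u ∈ Q.terms → ∀ z, u = Term.var z → z < V := by
    intro u hu z hz
    exact hV z (hz ▸ hu)
  have hsmallav : ∀ x ∈ av, ∀ z, h x = Term.var z → z < V := by
    intro x hx
    exact hsmallQ _ (atomsTerms_subset_terms Q (homTo_var_small hhom x hx))
  have hevav : ∀ x ∈ av, (h' x).eval μ' = (h x).eval μ := by
    intro x hx
    rw [show h' x = h x by simp [hh', hx]]
    exact eval_eq_of_small hagree (hsmallav x hx)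
  refine ⟨⟨Q.head, Q.body ++ (σ.head.map Atom.orig).map (Atom.mapTerms (Term.subst h')),
      Q.diseqs⟩, ⟨h', fun x hx => by simp [hh', hx], ?_, ?_, rfl⟩, μ', ?_, ?_, ?_⟩
  · intro x _ hx
    refine ⟨V + x, by simp [hh', hx], fun hmem => ?_⟩
    exact absurd (hV _ hmem) (by omega)
  · intro x hx y hy hxy
    simp only [hh', if_neg hx.2, if_neg hy.2, Term.var.injEq] at hxy
    omega
  · -- body holds
    intro A' hA'
    rcases List.mem_append.1 hA' with hA' | hA'
    · have : (fun i => (A'.args i).eval μ') = (fun i => (A'.args i).eval μ) := by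
        funext i
        refine eval_eq_of_small hagree (hsmallQ _ ?_)
        exact atomsTerms_subset_terms Q ⟨A', hA', i, rfl⟩
      rw [this]
      exact hb A' hA'
    · rw [List.map_map] at hA'
      obtain ⟨A0, hA0, rfl⟩ := List.mem_map.1 hA'
      have : (fun i => (((Atom.mapTerms (Term.subst h') ∘ Atom.orig) A0).args i).eval μ') =
          (fun i => (A0.args i).eval ν') := by
        funext i
        obtain ⟨y, hy⟩ := hcf A0 hA0 i
        show ((Term.subst h') ((A0.args i).orig)).eval μ' = (A0.args i).eval ν'
        rw [hy]
        show (h' (2 * y)).eval μ' = ν' y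
        by_cases hyav : 2 * y ∈ av
        · rw [hevav _ hyav, ← hag y (normBody_even_var hyav)]
        · rw [show h' (2 * y) = Term.var (V + 2 * y) by simp [hh', hyav]]
          show μ' (V + 2 * y) = ν' y
          rw [hμ']
          simp only [Nat.add_sub_cancel_left, if_neg (by omega : ¬ V + 2 * y < V)]
          congr 1
          omega
      rw [this]
      exact hheadI A0 hA0
  · intro p hp
    have h1 : p.1.eval μ' = p.1.eval μ :=
      eval_eq_of_small hagree (hsmallQ _ (Or.inr (Or.inr ⟨p, hp, Or.inl rfl⟩)))
    have h2 : p.2.eval μ' = p.2.eval μ :=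
      eval_eq_of_small hagree (hsmallQ _ (Or.inr (Or.inr ⟨p, hp, Or.inr rfl⟩)))
    rw [h1, h2]
    exact hdq p hp
  · rw [hh]
    funext i
    exact (eval_eq_of_small hagree (hsmallQ _ (Or.inl ⟨i, rfl⟩))).symm

end StepSat


/-! ### The chase-step satisfiability lemma -/

section StepMain

lemma step_sat (M : MVSetting) {k : ℕ} {I : Inst M.S} (hI : M.ValidBase I)
    {t : Fin k → Val} {Q : CQNeq M.S k} (hQ : t ∈ Q.answer I)
    {C : Set (Option (CQNeq M.S k))} (hC : C ∈ M.qSteps k (some Q)) :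
    ∃ Q', some Q' ∈ C ∧ t ∈ Q'.answer I := by
  classical
  obtain ⟨μ, hb, hdq, hh⟩ := hQ
  rcases hC with ⟨σ, hσ, hg⟩ | ⟨σ, hσ, hg⟩ | ⟨v, hv, hg⟩ | ⟨v, hg⟩
  · -- tgd of Σ
    obtain ⟨h, hhom, hnsat, rfl⟩ := hg
    by_cases hall : ∀ p ∈ normEqs σ.body, (p.1.subst h).eval μ = (p.2.subst h).eval μ
    · have hw : BodyHolds (fun x => (h (2 * x)).eval μ) σ.body I :=
        norm_eval_body μ h hhom hb hall
      have hσh : σ.holds I := hI.2.1 _ hσ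
      obtain ⟨ν', hag, hheadI⟩ := hσh _ hw
      obtain ⟨Q', hch, hsat⟩ := exAtoms_step_sat hb hdq hh (M.depsConstantFree _ hσ).2
        hhom ν' (fun x hx => hag x hx) hheadI
      exact ⟨Q', Or.inl ⟨GDisj.exAtoms (σ.head.map Atom.orig),
        List.mem_cons_self, Q', rfl, hch⟩, hsat⟩
    · push_neg at hall
      obtain ⟨p, hp, hne⟩ := hall
      obtain ⟨Q', hch, hsat⟩ := neqChild_sat hb hdq hh hne
      exact ⟨Q', Or.inl ⟨GDisj.neq p.1 p.2,
        List.mem_cons_of_mem _ (List.mem_map.2 ⟨p, hp, rfl⟩), Q', rfl, hch⟩, hsat⟩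
  · -- egd of Σ
    obtain ⟨h, hhom, hnsat, rfl⟩ := hg
    by_cases hall : ∀ p ∈ normEqs σ.body, (p.1.subst h).eval μ = (p.2.subst h).eval μ
    · have hw : BodyHolds (fun x => (h (2 * x)).eval μ) σ.body I :=
        norm_eval_body μ h hhom hb hall
      have hσh : σ.holds I := hI.2.1 _ hσ
      have heqv := hσh _ hw
      have heL : ((Term.var σ.lhs).orig.subst h).eval μ =
          ((Term.var σ.rhs).orig.subst h).eval μ := by
        rw [orig_subst_eval, orig_subst_eval]
        exact heqv
      obtain ⟨Q', θ, hch, hQ'eq, hevθ⟩ := eqsChild_exists_single h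
        ((Term.var σ.lhs).orig, (Term.var σ.rhs).orig) μ hdq heL
      refine ⟨Q', Or.inl ⟨GDisj.eqs [((Term.var σ.lhs).orig, (Term.var σ.rhs).orig)],
        List.mem_cons_self, Q', rfl, hch⟩, ?_⟩
      rw [hQ'eq]
      exact mapTerms_sat hb hdq hh θ hevθ
    · push_neg at hall
      obtain ⟨p, hp, hne⟩ := hall
      obtain ⟨Q', hch, hsat⟩ := neqChild_sat hb hdq hh hne
      exact ⟨Q', Or.inl ⟨GDisj.neq p.1 p.2,
        List.mem_cons_of_mem _ (List.mem_map.2 ⟨p, hp, rfl⟩), Q', rfl, hch⟩, hsat⟩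
  · -- implication constraint of an empty view
    obtain ⟨h, hhom, hnsat, rfl⟩ := hg
    by_cases hall : ∀ p ∈ normEqs (M.views.defn v).body,
        (p.1.subst h).eval μ = (p.2.subst h).eval μ
    · exfalso
      have hw := norm_eval_body μ h hhom hb hall
      have hmem : (fun i => ((M.views.defn v).head i).eval (fun x => (h (2 * x)).eval μ)) ∈
          (M.views.defn v).answer I := ⟨_, hw, rfl⟩
      rw [hI.2.2 v, hv] at hmem
      exact hmem
    · push_neg at hall
      obtain ⟨p, hp, hne⟩ := hall
      obtain ⟨Q', hch, hsat⟩ := neqChild_sat hb hdq hh hne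
      exact ⟨Q', Or.inl ⟨GDisj.neq p.1 p.2, List.mem_map.2 ⟨p, hp, rfl⟩,
        Q', rfl, hch⟩, hsat⟩
  · -- generalized negd of a nonempty view
    obtain ⟨hne0, har, h, hhom, hnsatt, hnsatp, rfl⟩ := hg
    by_cases hall : ∀ p ∈ normEqs (M.views.defn v).body,
        (p.1.subst h).eval μ = (p.2.subst h).eval μ
    · have hw := norm_eval_body μ h hhom hb hall
      set w : ℕ → Val := fun x => (h (2 * x)).eval μ with hwdef
      set tv : Fin (M.views.arity v) → Val :=
        fun i => ((M.views.defn v).head i).eval w with htv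
      have hmemv : tv ∈ M.mv.rels v := by
        rw [← hI.2.2 v]
        exact ⟨w, hw, rfl⟩
      have hevL : ∀ p ∈ M.gnegdPairs v tv, (p.1.subst h).eval μ = (p.2.subst h).eval μ := by
        intro p hp
        obtain ⟨i, rfl⟩ := List.mem_ofFn.1 hp
        obtain ⟨c, hc⟩ := M.mvGround v tv hmemv i
        have h1 : ((((M.views.defn v).head i).orig).subst h).eval μ = tv i :=
          orig_subst_eval h μ _
        have h2 : (((tv i).toTerm).subst h).eval μ = Val.const c := by
          rw [hc]
          rfl
        show ((((M.views.defn v).head i).orig).subst h).eval μ =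
          (((tv i).toTerm).subst h).eval μ
        rw [h1, h2, hc]
      have hconsts : ∀ p ∈ M.gnegdPairs v tv, ∃ c, p.2.subst h = Term.const c := by
        intro p hp
        obtain ⟨i, rfl⟩ := List.mem_ofFn.1 hp
        obtain ⟨c, hc⟩ := M.mvGround v tv hmemv i
        exact ⟨c, by show ((tv i).toTerm).subst h = _; rw [hc]; rfl⟩
      obtain ⟨Q', θ, hch, hQ'eq, hevθ⟩ :=
        eqsChild_exists_consts h (M.gnegdPairs v tv) μ hdq hevL hconsts
      refine ⟨Q', Or.inl ⟨tv, hmemv, Q', rfl, hch⟩, ?_⟩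
      rw [hQ'eq]
      exact mapTerms_sat hb hdq hh θ hevθ
    · push_neg at hall
      obtain ⟨p, hp, hne⟩ := hall
      obtain ⟨Q', hch, hsat⟩ := neqChild_sat hb hdq hh hne
      exact ⟨Q', Or.inr (Or.inl ⟨p, hp, Q', rfl, hch⟩), hsat⟩

lemma gdepResults_nonempty {S : Schema} {k : ℕ} (g : GDep S) (Q : CQNeq S k) (h : ℕ → Term) :
    (gdepResults g Q h).Nonempty := by
  classical
  by_cases hall : ∀ d ∈ g.disjs, disjFails Q h d
  · exact ⟨none, Or.inr ⟨rfl, hall⟩⟩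
  · push_neg at hall
    obtain ⟨d, hd, hnf⟩ := hall
    cases d with
    | exAtoms ψ =>
      obtain ⟨Q', hch⟩ := exAtomsChild_exists Q h (BodyVars g.ante) ψ
      exact ⟨some Q', Or.inl ⟨_, hd, Q', rfl, hch⟩⟩
    | eqs L =>
      obtain ⟨Q', hch⟩ := not_not.1 hnf
      exact ⟨some Q', Or.inl ⟨_, hd, Q', rfl, hch⟩⟩
    | neq a b =>
      have hne : a.subst h ≠ b.subst h := hnf
      exact ⟨some ⟨Q.head, Q.body, Q.diseqs ++ [(a.subst h, b.subst h)]⟩,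
        Or.inl ⟨_, hd, _, rfl, hne, rfl⟩⟩

lemma qSteps_nonempty (M : MVSetting) (k : ℕ) :
    ∀ (o : Option (CQNeq M.S k)) (C : Set (Option (CQNeq M.S k))),
      C ∈ M.qSteps k o → C.Nonempty := by
  intro o C hC
  cases o with
  | none => exact absurd hC (by simp [MVSetting.qSteps])
  | some Q =>
    rcases hC with ⟨σ, hσ, hg⟩ | ⟨σ, hσ, hg⟩ | ⟨v, hv, hg⟩ | ⟨v, hg⟩
    · obtain ⟨h, -, -, rfl⟩ := hg
      exact gdepResults_nonempty _ _ _
    · obtain ⟨h, -, -, rfl⟩ := hg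
      exact gdepResults_nonempty _ _ _
    · obtain ⟨h, -, -, rfl⟩ := hg
      exact gdepResults_nonempty _ _ _
    · obtain ⟨hne0, har, h, hhom, h1, h2, rfl⟩ := hg
      classical
      by_cases hallt : (∀ t ∈ M.mv.rels v, disjFails Q h (GDisj.eqs (M.gnegdPairs v t))) ∧
          (∀ p ∈ normEqs (M.views.defn v).body, disjFails Q h (GDisj.neq p.1 p.2))
      · exact ⟨none, Or.inr (Or.inr ⟨rfl, hallt.1, hallt.2⟩)⟩
      · rw [not_and_or] at hallt
        rcases hallt with h3 | h3 <;> push_neg at h3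
        · obtain ⟨tv, htv, hnf⟩ := h3
          obtain ⟨Q', hch⟩ := not_not.1 hnf
          exact ⟨some Q', Or.inl ⟨tv, htv, Q', rfl, hch⟩⟩
        · obtain ⟨p, hp, hnf⟩ := h3
          have hne : p.1.subst h ≠ p.2.subst h := hnf
          exact ⟨some ⟨Q.head, Q.body, Q.diseqs ++ [(p.1.subst h, p.2.subst h)]⟩,
            Or.inr (Or.inl ⟨p, hp, _, rfl, hne, rfl⟩)⟩

end StepMain


/-! ### Satisfiability of the expansion, and chase soundness -/

section Backward

lemma expansion_sat (M : MVSetting) {k : ℕ} {Q1 : CQ M.S k} (h1 : Q1.Safe)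
    {Q1' : CQNeq M.S k} (hexp : M.IsMSExpansion Q1 Q1')
    {I : Inst M.S} (hI : M.ValidBase I) {t : Fin k → Val} (ht : t ∈ Q1.answer I) :
    t ∈ Q1'.answer I := by
  classical
  obtain ⟨hhead, hdis, ν, hνhead, hνfresh, hνinj, hbodyset⟩ := hexp
  obtain ⟨ν0, hb0, htt⟩ := ht
  have hWex : ∀ (v : M.views.idx) (tv : Fin (M.views.arity v) → Val), tv ∈ M.mv.rels v →
      ∃ w : ℕ → Val, BodyHolds w (M.views.defn v).body I ∧
        tv = fun i => ((M.views.defn v).head i).eval w := by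
    intro v tv htv
    rw [← hI.2.2 v] at htv
    exact htv
  choose W hW1 hW2 using hWex
  set P : ℕ → Prop := fun y => ∃ v tv x, ∃ htv : tv ∈ M.mv.rels v,
    x ∈ BodyVars (M.views.defn v).body ∧ (¬ ∃ i, (M.views.defn v).head i = Term.var x) ∧
    ν v tv x = Term.var y with hP
  have hpoint : ∀ y, ∃ a : Val, (¬ P y → a = ν0 y) ∧
      (∀ v tv (htv : tv ∈ M.mv.rels v) x, x ∈ BodyVars (M.views.defn v).body →
        (¬ ∃ i, (M.views.defn v).head i = Term.var x) →
        ν v tv x = Term.var y → a = W v tv htv x) := by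
    intro y
    by_cases hy : P y
    · obtain ⟨v, tv, x, htv, hxb, hxh, hνx⟩ := hy
      refine ⟨W v tv htv x, fun hc => absurd ⟨v, tv, x, htv, hxb, hxh, hνx⟩ hc, ?_⟩
      intro v' tv' htv' x' hxb' hxh' hνx'
      obtain ⟨hv, htveq, hxeq⟩ := hνinj v v' tv tv' x x' htv htv' hxb hxh hxb' hxh'
        (by rw [hνx, hνx'])
      subst hv
      have htv2 : tv = tv' := eq_of_heq htveq
      subst htv2
      subst hxeq
      rfl
    · exact ⟨ν0 y, fun _ => rfl,
        fun v tv htv x hxb hxh hνx => absurd ⟨v, tv, x, htv, hxb, hxh, hνx⟩ hy⟩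
  choose μ hμ1 hμ2 using hpoint
  have hagree : ∀ y, (∃ A ∈ Q1.body, ∃ j, A.args j = Term.var y) → μ y = ν0 y := by
    intro y hy
    refine hμ1 y ?_
    rintro ⟨v, tv, x, htv, hxb, hxh, hνx⟩
    obtain ⟨y', hy', hh1, hh2⟩ := hνfresh v tv htv x hxb hxh
    rw [hνx] at hy'
    cases hy'
    exact hh2 hy
  refine ⟨μ, ?_, ?_, ?_⟩
  · -- body of the expansion holds
    intro A hA
    have hA' : A ∈ ({A | A ∈ Q1.body} ∪
        {A | ∃ v, ∃ t ∈ M.mv.rels v, ∃ A0 ∈ (M.views.defn v).body,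
          A = A0.mapTerms (Term.subst (ν v t))} : Set (Atom M.S)) := by
      rw [← hbodyset]
      exact hA
    rcases hA' with hA' | hA'
    · have : (fun i => (A.args i).eval μ) = (fun i => (A.args i).eval ν0) := by
        funext i
        cases harg : A.args i with
        | var y => exact hagree y ⟨A, hA', i, harg⟩
        | const c => rfl
      rw [this]
      exact hb0 A hA'
    · obtain ⟨v, tv, htv, A0, hA0, rfl⟩ := hA'
      have : (fun i => (((A0.mapTerms (Term.subst (ν v tv)))).args i).eval μ) =
          (fun i => (A0.args i).eval (W v tv htv)) := by
        funext i
        show ((A0.args i).subst (ν v tv)).eval μ = (A0.args i).eval (W v tv htv)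
        cases harg : A0.args i with
        | const c => rfl
        | var x =>
          have hxb : x ∈ BodyVars (M.views.defn v).body := ⟨A0, hA0, i, harg⟩
          by_cases hx : ∃ i0, (M.views.defn v).head i0 = Term.var x
          · obtain ⟨i0, hi0⟩ := hx
            have hsub := hνhead v tv htv i0
            rw [hi0] at hsub
            obtain ⟨c, hc⟩ := M.mvGround v tv htv i0
            have hWx : W v tv htv x = tv i0 := by
              have h2 := congrFun (hW2 v tv htv) i0
              rw [h2, hi0]
              rfl
            show ((ν v tv) x).eval μ = W v tv htv x
            rw [show (ν v tv) x = (tv i0).toTerm from hsub, hWx, hc]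
            rfl
          · obtain ⟨y, hy, -, -⟩ := hνfresh v tv htv x hxb hx
            show ((ν v tv) x).eval μ = W v tv htv x
            rw [hy]
            exact hμ2 y v tv htv x hxb hx hy
      rw [this]
      exact hW1 v tv htv A0 hA0
  · intro p hp
    rw [hdis] at hp
    cases hp
  · rw [hhead, htt]
    funext i
    cases hhi : Q1.head i with
    | const c => rfl
    | var y =>
      show ν0 y = μ y
      exact (hagree y (h1.2 y ⟨i, hhi⟩)).symm

lemma chase_leaf_sat (M : MVSetting) {k : ℕ} {Q1' : CQNeq M.S k} {R : List (CQNeq M.S k)}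
    (hR : M.IsChaseResult Q1' R)
    {I : Inst M.S} (hI : M.ValidBase I) {t : Fin k → Val} (ht : t ∈ Q1'.answer I) :
    ∃ Ql ∈ R, t ∈ Ql.answer I := by
  obtain ⟨T, hlab, hvalid, hRdef⟩ := hR
  have hmain := RTree.valid_leaves_sat (D := M.qSteps k)
    (fun o => ∃ Q', o = some Q' ∧ t ∈ Q'.answer I)
    (by
      rintro a ⟨Q0, rfl, hQ0⟩ C hC
      obtain ⟨Q', hQ'C, hQ's⟩ := step_sat M hI hQ0 hC
      exact ⟨some Q', hQ'C, Q', rfl, hQ's⟩)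
    T hvalid ⟨Q1', hlab, ht⟩
  obtain ⟨x, hx, Q', rfl, hQ'⟩ := hmain
  refine ⟨Q', ?_, hQ'⟩
  rw [hRdef]
  exact List.mem_filterMap.2 ⟨some Q', hx, rfl⟩

end Backward


/-! ### Forward direction: leaves give valid base instances -/

section Forward

variable {S : Schema} {k : ℕ}

lemma frozen_bodyHolds (body : List (Atom S)) (fz : ℕ → Val) :
    BodyHolds fz body (Inst.ofFacts (factSet body fz)) :=
  fun A hA => ⟨A, hA, rfl⟩

lemma subst_bodyHolds {Ql : CQNeq S k} {I : Inst S} (μ : ℕ → Val)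
    (hQl : BodyHolds μ Ql.body I) {B : List (Atom S)} {f : ℕ → Term}
    (hmap : ∀ A ∈ B, A.mapTerms (Term.subst f) ∈ Ql.body) :
    BodyHolds (fun x => (f x).eval μ) B I := by
  intro A hA
  have hf := hQl _ (hmap A hA)
  have heq : (fun i => ((A.mapTerms (Term.subst f)).args i).eval μ) =
      (fun i => (A.args i).eval (fun x => (f x).eval μ)) := by
    funext i
    exact eval_subst μ f _
  rw [heq] at hf
  exact hf

lemma bodyvar_to_norm {B : List (Atom S)} {x : ℕ} (hx : x ∈ BodyVars B) :
    2 * x ∈ BodyVars (normBody B) := by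
  obtain ⟨j, i, hsome⟩ := mem_bodyVars_iff.1 hx
  obtain ⟨j0, i0, hsome0, hnd, -⟩ := exists_first j i _ hsome
  refine mem_bodyVars_normBody_iff.2 ⟨j0, i0, ?_⟩
  unfold narg
  rw [hsome0, Option.map_some, if_neg (by simp [hnd])]
  rfl

lemma norm_evenvar_mem {B : List (Atom S)} {x : ℕ}
    (h : ∃ j i, narg B j i = some (Term.var (2 * x))) : x ∈ BodyVars B :=
  normBody_even_var (mem_bodyVars_normBody_iff.2 h)

lemma neq_disjSat_false {Ql : CQNeq S k} (hdne : ∀ a : Term, ¬ Ql.hasDiseq a a)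
    {h : ℕ → Term} {a b : Term} (hab : a.subst h = b.subst h) (av : Set ℕ) :
    ¬ disjSat Ql h av (GDisj.neq a b) := by
  rintro (⟨c, d, hc, hd, hcd⟩ | hdq)
  · rw [hab] at hc
    rw [hc] at hd
    cases hd
    exact hcd rfl
  · rw [hab] at hdq
    exact hdne _ hdq

/-- The main forward lemma: a non-`ε` leaf of the chase, together with the
invariant, yields that its frozen instance is a Σ-valid base instance. -/
lemma leaf_valid_base (M : MVSetting) {k : ℕ} (Ql : CQNeq M.S k)
    (hdne : ∀ a : Term, ¬ Ql.hasDiseq a a)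
    (hleaf : M.qSteps k (some Ql) = ∅)
    (hInv2 : ∀ v, ∀ tv ∈ M.mv.rels v, ∃ hv : ℕ → Term,
      (∀ i, ((M.views.defn v).head i).subst hv = (tv i).toTerm) ∧
      (∀ A ∈ (M.views.defn v).body, A.mapTerms (Term.subst hv) ∈ Ql.body))
    (W : ℕ)
    (hc1 : ∀ c, Term.const c ∈ Ql.terms → c < W)
    (hv1 : ∀ x, Term.var x ∈ Ql.terms → x < W)
    (hcv : ∀ (v : M.views.idx) c,
      (∃ A ∈ (M.views.defn v).body, ∃ j, A.args j = Term.const c) → c < W) :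
    M.ValidBase (Inst.ofFacts (factSet Ql.body (fun x => Val.const (x + W)))) := by
  classical
  set fz : ℕ → Val := fun x => Val.const (x + W) with hfz
  set Il : Inst M.S := Inst.ofFacts (factSet Ql.body fz) with hIl
  refine ⟨?_, ?_, ?_⟩
  · -- groundness
    intro r tu htu i
    obtain ⟨args', -, hev⟩ := frozen_mem_inv htu
    rw [← hev i]
    cases args' i with
    | var x => exact ⟨x + W, rfl⟩
    | const c => exact ⟨c, rfl⟩
  · -- dependencies
    intro d hd
    cases d with
    | tgd σ =>
      intro g hg
      have hBc : ∀ c, (∃ A ∈ σ.body, ∃ j, A.args j = Term.const c) → c < W := by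
        rintro c ⟨A, hA, j, hj⟩
        obtain ⟨x, hx⟩ := (M.depsConstantFree _ hd).1 A hA j
        rw [hj] at hx
        cases hx
      obtain ⟨h, hhom, hii, hiii, hiv, hv⟩ := lift_trigger Ql W hc1 σ.body hBc g hg
      have hstep0 : ¬ (∀ d' ∈ σ.neqT.disjs, ¬ disjSat Ql h (BodyVars σ.neqT.ante) d') := by
        intro hnon
        have hmem : gdepResults σ.neqT Ql h ∈ M.qSteps k (some Ql) :=
          Or.inl ⟨σ, hd, h, hhom, hnon, rfl⟩
        rw [hleaf] at hmem
        exact hmem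
      push_neg at hstep0
      obtain ⟨d', hd', hsat⟩ := hstep0
      rcases List.mem_cons.1 hd' with rfl | hd'
      · -- the existential disjunct is satisfied
        obtain ⟨h', hagree, hmap⟩ := hsat
        refine ⟨fun x => (h' (2 * x)).eval fz, ?_, ?_⟩
        · intro x hx
          show (h' (2 * x)).eval fz = g x
          rw [hagree _ (bodyvar_to_norm hx)]
          exact hii x hx
        · intro A hA
          have hmem := frozen_bodyHolds Ql.body fz _ (hmap _ (List.mem_map_of_mem hA))
          have heq : (fun i => (((A.orig).mapTerms (Term.subst h')).args i).eval fz) =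
              (fun i => (A.args i).eval (fun x => (h' (2 * x)).eval fz)) := by
            funext i
            exact orig_subst_eval h' fz _
          rw [heq] at hmem
          exact hmem
      · exfalso
        obtain ⟨p, hp, rfl⟩ := List.mem_map.1 hd'
        exact neq_disjSat_false hdne (hiii p hp) _ hsat
    | egd σ =>
      intro g hg
      have hBc : ∀ c, (∃ A ∈ σ.body, ∃ j, A.args j = Term.const c) → c < W := by
        rintro c ⟨A, hA, j, hj⟩
        obtain ⟨x, hx⟩ := (M.depsConstantFree _ hd) A hA j
        rw [hj] at hx
        cases hx
      obtain ⟨h, hhom, hii, hiii, hiv, hv⟩ := lift_trigger Ql W hc1 σ.body hBc g hg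
      have hstep0 : ¬ (∀ d' ∈ σ.neqT.disjs, ¬ disjSat Ql h (BodyVars σ.neqT.ante) d') := by
        intro hnon
        have hmem : gdepResults σ.neqT Ql h ∈ M.qSteps k (some Ql) :=
          Or.inr (Or.inl ⟨σ, hd, h, hhom, hnon, rfl⟩)
        rw [hleaf] at hmem
        exact hmem
      push_neg at hstep0
      obtain ⟨d', hd', hsat⟩ := hstep0
      rcases List.mem_cons.1 hd' with rfl | hd'
      · -- the equality disjunct is satisfied as terms
        have hterm : h (2 * σ.lhs) = h (2 * σ.rhs) := by
          have := hsat (((Term.var σ.lhs).orig, (Term.var σ.rhs).orig))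
            (List.mem_singleton.2 rfl)
          exact this
        by_cases hl : σ.lhs ∈ BodyVars σ.body <;> by_cases hr : σ.rhs ∈ BodyVars σ.body
        · rw [← hii _ hl, ← hii _ hr, hterm]
        · exfalso
          have h1 : h (2 * σ.lhs) ∈ atomsTerms Ql.body := by
            refine hv _ ?_
            obtain ⟨j, i, hsome⟩ := mem_bodyVars_iff.1 hl
            obtain ⟨j0, i0, hsome0, hnd, -⟩ := exists_first j i _ hsome
            refine ⟨j0, i0, ?_⟩
            unfold narg
            rw [hsome0, Option.map_some, if_neg (by simp [hnd])]
            rfl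
          have h2 : h (2 * σ.rhs) = Term.var (W + 2 * σ.rhs) := by
            refine hiv _ ?_
            intro hex
            exact hr (norm_evenvar_mem hex)
          rw [h2] at hterm
          have := hv1 (W + 2 * σ.rhs) (atomsTerms_subset_terms Ql (hterm ▸ h1))
          omega
        · exfalso
          have h1 : h (2 * σ.rhs) ∈ atomsTerms Ql.body := by
            refine hv _ ?_
            obtain ⟨j, i, hsome⟩ := mem_bodyVars_iff.1 hr
            obtain ⟨j0, i0, hsome0, hnd, -⟩ := exists_first j i _ hsome
            refine ⟨j0, i0, ?_⟩
            unfold narg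
            rw [hsome0, Option.map_some, if_neg (by simp [hnd])]
            rfl
          have h2 : h (2 * σ.lhs) = Term.var (W + 2 * σ.lhs) := by
            refine hiv _ ?_
            intro hex
            exact hl (norm_evenvar_mem hex)
          rw [h2] at hterm
          have := hv1 (W + 2 * σ.lhs) (atomsTerms_subset_terms Ql (hterm.symm ▸ h1))
          omega
        · -- neither occurs: the variables must coincide
          have h2 : h (2 * σ.lhs) = Term.var (W + 2 * σ.lhs) :=
            hiv _ (fun hex => hl (norm_evenvar_mem hex))
          have h3 : h (2 * σ.rhs) = Term.var (W + 2 * σ.rhs) :=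
            hiv _ (fun hex => hr (norm_evenvar_mem hex))
          rw [h2, h3, Term.var.injEq] at hterm
          have : σ.lhs = σ.rhs := by omega
          rw [this]
      · exfalso
        obtain ⟨p, hp, rfl⟩ := List.mem_map.1 hd'
        exact neq_disjSat_false hdne (hiii p hp) _ hsat
  · -- the views are exactly MV
    intro v
    apply Set.eq_of_subset_of_subset
    · -- answers are tuples of MV
      rintro u ⟨g, hg, rfl⟩
      by_cases hv0 : M.mv.rels v = ∅
      · exfalso
        obtain ⟨h, hhom, hii, hiii, hiv, hvv⟩ :=
          lift_trigger Ql W hc1 (M.views.defn v).body (hcv v) g hg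
        have hnon : ∀ d' ∈ (M.gicDep v).disjs, ¬ disjSat Ql h (BodyVars (M.gicDep v).ante) d' := by
          intro d' hd'
          obtain ⟨p, hp, rfl⟩ := List.mem_map.1 hd'
          exact neq_disjSat_false hdne (hiii p hp) _
        have hmem : gdepResults (M.gicDep v) Ql h ∈ M.qSteps k (some Ql) :=
          Or.inr (Or.inr (Or.inl ⟨v, hv0, h, hhom, hnon, rfl⟩))
        rw [hleaf] at hmem
        exact hmem
      · have hvne : (M.mv.rels v).Nonempty := Set.nonempty_iff_ne_empty.2 hv0
        by_cases har : 1 ≤ M.views.arity v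
        · obtain ⟨h, hhom, hii, hiii, hiv, hvv⟩ :=
            lift_trigger Ql W hc1 (M.views.defn v).body (hcv v) g hg
          have hnonp : ∀ p ∈ normEqs (M.views.defn v).body,
              ¬ disjSat Ql h (BodyVars (normBody (M.views.defn v).body)) (GDisj.neq p.1 p.2) :=
            fun p hp => neq_disjSat_false hdne (hiii p hp) _
          have hext : ∃ tv ∈ M.mv.rels v,
              disjSat Ql h (BodyVars (normBody (M.views.defn v).body))
                (GDisj.eqs (M.gnegdPairs v tv)) := by
            by_contra hnone
            push_neg at hnone
            have hmem : ({ o | (∃ t ∈ M.mv.rels v,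
                    o ∈ disjChild Ql h (BodyVars (normBody (M.views.defn v).body))
                        (GDisj.eqs (M.gnegdPairs v t)))
               ∨ (∃ p ∈ normEqs (M.views.defn v).body,
                    o ∈ disjChild Ql h (BodyVars (normBody (M.views.defn v).body))
                        (GDisj.neq p.1 p.2))
               ∨ (o = none ∧
                    (∀ t ∈ M.mv.rels v, disjFails Ql h (GDisj.eqs (M.gnegdPairs v t))) ∧
                    (∀ p ∈ normEqs (M.views.defn v).body, disjFails Ql h (GDisj.neq p.1 p.2))) } :
                Set (Option (CQNeq M.S k))) ∈ M.qSteps k (some Ql) :=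
              Or.inr (Or.inr (Or.inr ⟨v, hvne, har, h, hhom, hnone, hnonp, rfl⟩))
            rw [hleaf] at hmem
            exact hmem
          obtain ⟨tv, htv, hsat⟩ := hext
          have hueq : (fun i => ((M.views.defn v).head i).eval g) = tv := by
            funext i
            have hpair := hsat ((((M.views.defn v).head i).orig, (tv i).toTerm))
              (List.mem_ofFn.2 ⟨i, rfl⟩)
            -- evaluate the term equality under the freeze
            have hev := congrArg (Term.eval fz) hpair
            obtain ⟨c, hc⟩ := M.mvGround v tv htv i
            have hL : (((((M.views.defn v).head i).orig).subst h)).eval fz =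
                ((M.views.defn v).head i).eval g := by
              cases hhi : (M.views.defn v).head i with
              | const c' => rfl
              | var x =>
                have hxb : x ∈ BodyVars (M.views.defn v).body :=
                  (M.views.safe v).2 x ⟨i, hhi⟩
                show (h (2 * x)).eval fz = g x
                exact hii x hxb
            have hR : ((((tv i).toTerm)).subst h).eval fz = tv i := by
              rw [hc]
              rfl
            rw [hL, hR] at hev
            exact hev
          rw [hueq]
          exact htv
        · obtain ⟨tv, htv⟩ := hvne
          have hu : (fun i => ((M.views.defn v).head i).eval g) = tv := by
            funext i
            exact absurd i.isLt (by omega)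
          rw [hu]
          exact htv
    · -- tuples of MV are answers
      intro tv htv
      obtain ⟨hv, hvhead, hvbody⟩ := hInv2 v tv htv
      refine ⟨fun x => (hv x).eval fz, subst_bodyHolds fz (frozen_bodyHolds Ql.body fz) hvbody, ?_⟩
      funext i
      have := congrArg (Term.eval fz) (hvhead i)
      rw [eval_subst] at this
      obtain ⟨c, hc⟩ := M.mvGround v tv htv i
      rw [show ((tv i).toTerm).eval fz = tv i by rw [hc]; rfl] at this
      exact this.symm

end Forward


/-! ### The invariant along the chase, and the main theorem -/

section Invariant

lemma mapTerms_subst_id {S : Schema} (A : Atom S) : A.mapTerms (Term.subst Term.var) = A := by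
  cases A with
  | mk r args =>
    show (⟨r, fun i => (args i).subst Term.var⟩ : Atom S) = ⟨r, args⟩
    exact congrArg (fun f => (⟨r, f⟩ : Atom S)) (funext fun i => subst_id _)

lemma child_cases (M : MVSetting) {k : ℕ} {Q : CQNeq M.S k} {C : Set (Option (CQNeq M.S k))}
    (hC : C ∈ M.qSteps k (some Q)) {Q' : CQNeq M.S k} (hQC : some Q' ∈ C) :
    (∃ θ : Term → Term, (∀ c, θ (Term.const c) = Term.const c) ∧ Q' = Q.mapTerms θ) ∨
    (Q'.head = Q.head ∧ ∀ A ∈ Q.body, A ∈ Q'.body) := by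
  have hdisj : ∀ (h : ℕ → Term) (av : Set ℕ) (d : GDisj M.S),
      some Q' ∈ disjChild Q h av d →
      (∃ θ : Term → Term, (∀ c, θ (Term.const c) = Term.const c) ∧ Q' = Q.mapTerms θ) ∨
      (Q'.head = Q.head ∧ ∀ A ∈ Q.body, A ∈ Q'.body) := by
    intro h av d hch
    cases d with
    | exAtoms ψ =>
      obtain ⟨Q'', heq, hch⟩ := hch
      cases heq
      obtain ⟨h', -, -, -, rfl⟩ := hch
      exact Or.inr ⟨rfl, fun A hA => List.mem_append_left _ hA⟩
    | eqs L =>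
      obtain ⟨Q'', heq, hch⟩ := hch
      cases heq
      obtain ⟨-, θ, hθc, -, -, -, rfl⟩ := hch
      exact Or.inl ⟨θ, hθc, rfl⟩
    | neq a b =>
      obtain ⟨Q'', heq, hch⟩ := hch
      cases heq
      obtain ⟨-, rfl⟩ := hch
      exact Or.inr ⟨rfl, fun A hA => hA⟩
  rcases hC with ⟨σ, hσ, hg⟩ | ⟨σ, hσ, hg⟩ | ⟨v, hv, hg⟩ | ⟨v, hg⟩
  · obtain ⟨h, -, -, rfl⟩ := hg
    rcases hQC with ⟨d, hd, hch⟩ | ⟨habs, -⟩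
    · exact hdisj h _ d hch
    · cases habs
  · obtain ⟨h, -, -, rfl⟩ := hg
    rcases hQC with ⟨d, hd, hch⟩ | ⟨habs, -⟩
    · exact hdisj h _ d hch
    · cases habs
  · obtain ⟨h, -, -, rfl⟩ := hg
    rcases hQC with ⟨d, hd, hch⟩ | ⟨habs, -⟩
    · exact hdisj h _ d hch
    · cases habs
  · obtain ⟨-, -, h, -, -, -, rfl⟩ := hg
    rcases hQC with ⟨tv, htv, hch⟩ | ⟨p, hp, hch⟩ | ⟨habs, -⟩
    · exact hdisj h _ _ hch
    · exact hdisj h _ _ hch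
    · cases habs

/-- The invariant carried through the chase: the original query and the
expansion of `MV` have homomorphisms into every node. -/
def ChaseInv (M : MVSetting) {k : ℕ} (Q1 : CQ M.S k) (Q : CQNeq M.S k) : Prop :=
  (∃ f : ℕ → Term, (∀ A ∈ Q1.body, A.mapTerms (Term.subst f) ∈ Q.body) ∧
     (∀ i, (Q1.head i).subst f = Q.head i)) ∧
  (∀ v, ∀ tv ∈ M.mv.rels v, ∃ hv : ℕ → Term,
     (∀ i, ((M.views.defn v).head i).subst hv = (tv i).toTerm) ∧
     (∀ A ∈ (M.views.defn v).body, A.mapTerms (Term.subst hv) ∈ Q.body))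

lemma ChaseInv_init (M : MVSetting) {k : ℕ} {Q1 : CQ M.S k} {Q1' : CQNeq M.S k}
    (hexp : M.IsMSExpansion Q1 Q1') : ChaseInv M Q1 Q1' := by
  obtain ⟨hhead, hdis, ν, hνhead, hνfresh, hνinj, hbodyset⟩ := hexp
  constructor
  · refine ⟨Term.var, fun A hA => ?_, fun i => by rw [hhead]; exact subst_id _⟩
    rw [mapTerms_subst_id]
    have hmem : A ∈ ({A | A ∈ Q1.body} ∪
        {A | ∃ v, ∃ t ∈ M.mv.rels v, ∃ A0 ∈ (M.views.defn v).body,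
          A = A0.mapTerms (Term.subst (ν v t))} : Set (Atom M.S)) := Or.inl hA
    rw [← hbodyset] at hmem
    exact hmem
  · intro v tv htv
    refine ⟨ν v tv, hνhead v tv htv, fun A hA => ?_⟩
    have hmem : A.mapTerms (Term.subst (ν v tv)) ∈ ({A | A ∈ Q1.body} ∪
        {A | ∃ v', ∃ t ∈ M.mv.rels v', ∃ A0 ∈ (M.views.defn v').body,
          A = A0.mapTerms (Term.subst (ν v' t))} : Set (Atom M.S)) :=
      Or.inr ⟨v, tv, htv, A, hA, rfl⟩
    rw [← hbodyset] at hmem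
    exact hmem

lemma ChaseInv_step (M : MVSetting) {k : ℕ} (Q1 : CQ M.S k) {Q Q' : CQNeq M.S k}
    {C : Set (Option (CQNeq M.S k))} (hC : C ∈ M.qSteps k (some Q)) (hQC : some Q' ∈ C)
    (hInv : ChaseInv M Q1 Q) : ChaseInv M Q1 Q' := by
  rcases child_cases M hC hQC with ⟨θ, hθc, rfl⟩ | ⟨hhd, hsub⟩
  · obtain ⟨⟨f, hf1, hf2⟩, hInv2⟩ := hInv
    constructor
    · refine ⟨fun x => θ (f x), fun A hA => ?_, fun i => ?_⟩
      · have hmem : (A.mapTerms (Term.subst f)).mapTerms θ ∈ (Q.mapTerms θ).body :=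
          List.mem_map.2 ⟨_, hf1 A hA, rfl⟩
        have heq : (A.mapTerms (Term.subst f)).mapTerms θ =
            A.mapTerms (Term.subst (fun x => θ (f x))) := by
          rw [mapTerms_mapTerms]
          exact congrArg (fun F => A.mapTerms F)
            (funext fun u => theta_subst f θ hθc u)
        rw [← heq]
        exact hmem
      · show (Q1.head i).subst (fun x => θ (f x)) = θ (Q.head i)
        rw [← hf2 i, ← theta_subst f θ hθc]
    · intro v tv htv
      obtain ⟨hv, hvh, hvb⟩ := hInv2 v tv htv
      refine ⟨fun x => θ (hv x), fun i => ?_, fun A hA => ?_⟩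
      · show ((M.views.defn v).head i).subst (fun x => θ (hv x)) = (tv i).toTerm
        rw [← theta_subst hv θ hθc, hvh i]
        obtain ⟨c, hc⟩ := M.mvGround v tv htv i
        rw [hc]
        exact hθc c
      · have hmem : (A.mapTerms (Term.subst hv)).mapTerms θ ∈ (Q.mapTerms θ).body :=
          List.mem_map.2 ⟨_, hvb A hA, rfl⟩
        have heq : (A.mapTerms (Term.subst hv)).mapTerms θ =
            A.mapTerms (Term.subst (fun x => θ (hv x))) := by
          rw [mapTerms_mapTerms]
          exact congrArg (fun F => A.mapTerms F)
            (funext fun u => theta_subst hv θ hθc u)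
        rw [← heq]
        exact hmem
  · obtain ⟨⟨f, hf1, hf2⟩, hInv2⟩ := hInv
    refine ⟨⟨f, fun A hA => hsub _ (hf1 A hA),
      fun i => (hf2 i).trans (congrFun hhd i).symm⟩, ?_⟩
    intro v tv htv
    obtain ⟨hv, hvh, hvb⟩ := hInv2 v tv htv
    exact ⟨hv, hvh, fun A hA => hsub _ (hvb A hA)⟩

lemma chase_leaves_prop (M : MVSetting) {k : ℕ} {Q1 : CQ M.S k} {Q1' : CQNeq M.S k}
    {R : List (CQNeq M.S k)} (hexp : M.IsMSExpansion Q1 Q1') (hR : M.IsChaseResult Q1' R) :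
    ∀ Ql ∈ R, ChaseInv M Q1 Ql ∧ M.qSteps k (some Ql) = ∅ := by
  obtain ⟨T, hlab, hvalid, hRdef⟩ := hR
  intro Ql hQl
  rw [hRdef] at hQl
  obtain ⟨o, ho, hid⟩ := List.mem_filterMap.1 hQl
  have ho' : o = some Ql := hid
  subst ho'
  have hmain := RTree.valid_leaves_prop (qSteps_nonempty M k)
    (fun o => ∀ Q', o = some Q' → ChaseInv M Q1 Q')
    (by
      rintro a b hPa C hC hbC Q' rfl
      cases a with
      | none => exact absurd hC (by simp [MVSetting.qSteps])
      | some Qa => exact ChaseInv_step M Q1 hC hbC (hPa Qa rfl))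
    T hvalid
    (by
      intro Q' hQ'
      rw [hlab] at hQ'
      cases hQ'
      exact ChaseInv_init M hexp)
    _ ho
  exact ⟨hmain.1 Ql rfl, hmain.2⟩

/-- Unfreezing values back to terms. -/
def unfreeze (W : ℕ) : Val → Term
  | Val.const c => if W ≤ c then Term.var (c - W) else Term.const c
  | Val.null _ => Term.var 0

lemma unfreeze_freeze (W : ℕ) (u : Term) (hu : ∀ c, u = Term.const c → c < W) :
    unfreeze W (u.eval (fun x => Val.const (x + W))) = u := by
  cases u with
  | var x =>
    show (if W ≤ x + W then Term.var (x + W - W) else Term.const (x + W)) = Term.var x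
    rw [if_pos (by omega : W ≤ x + W)]
    congr 1
    omega
  | const c =>
    show (if W ≤ c then Term.var (c - W) else Term.const c) = Term.const c
    rw [if_neg (fun h => absurd (hu c rfl) (by omega))]

end Invariant

theorem cond_containment_iff_chase (M : MVSetting) (hwa : WeaklyAcyclic M.deps)
    {k : ℕ} (Q1 Q2 : CQ M.S k) (h1 : Q1.Safe) (h2 : Q2.Safe)
    (Q1' : CQNeq M.S k) (hexp : M.IsMSExpansion Q1 Q1')
    (R : List (CQNeq M.S k)) (hR : M.IsChaseResult Q1' R) :
    M.CondContained Q1.answer Q2.answer ↔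
      (R = [] ∨ ∀ I : Inst M.S, ucqAnswer R I ⊆ Q2.answer I) := by
  classical
  constructor
  · intro hcond
    by_cases hR0 : R = []
    · exact Or.inl hR0
    refine Or.inr ?_
    intro I t ht
    obtain ⟨Ql, hQlR, htl⟩ := ht
    obtain ⟨hInv, hleaf⟩ := chase_leaves_prop M hexp hR Ql hQlR
    obtain ⟨νl, hbl, hdl, htt⟩ := htl
    have hIUfin : (⋃ v, atomsTerms (M.views.defn v).body).Finite := by
      haveI := M.views.finite
      exact Set.finite_iUnion (fun v => atomsTerms_finite _)
    have hTS : (Ql.terms ∪ (⋃ v, atomsTerms (M.views.defn v).body) ∪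
        (atomsTerms Q2.body ∪ Set.range Q2.head)).Finite :=
      ((cqneq_terms_finite Ql).union hIUfin).union
        ((atomsTerms_finite _).union (Set.finite_range _))
    obtain ⟨W, hW⟩ := exists_term_bound _ hTS
    have hdne : ∀ a : Term, ¬ Ql.hasDiseq a a := by
      rintro a (h | h)
      · exact hdl _ h rfl
      · exact hdl _ h rfl
    have hc1 : ∀ c, Term.const c ∈ Ql.terms → c < W :=
      fun c hc => (hW _ (Or.inl (Or.inl hc))).2 c rfl
    have hv1 : ∀ x, Term.var x ∈ Ql.terms → x < W :=
      fun x hx => (hW _ (Or.inl (Or.inl hx))).1 x rfl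
    have hcv : ∀ (v : M.views.idx) c,
        (∃ A ∈ (M.views.defn v).body, ∃ j, A.args j = Term.const c) → c < W := by
      rintro v c ⟨A, hA, j, hj⟩
      exact (hW _ (Or.inl (Or.inr (Set.mem_iUnion.2 ⟨v, A, hA, j, hj⟩)))).2 c rfl
    have hVB := leaf_valid_base M Ql hdne hleaf hInv.2 W hc1 hv1 hcv
    obtain ⟨f, hf1, hf2⟩ := hInv.1
    have hQ1l : (fun i => (Ql.head i).eval (fun x => Val.const (x + W))) ∈
        Q1.answer (Inst.ofFacts (factSet Ql.body (fun x => Val.const (x + W)))) := by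
      refine ⟨fun x => (f x).eval (fun x => Val.const (x + W)),
        subst_bodyHolds _ (frozen_bodyHolds Ql.body _) hf1, ?_⟩
      funext i
      rw [← hf2 i, eval_subst]
    have hQ2l := hcond _ hVB hQ1l
    obtain ⟨g2, hg2, ht2⟩ := hQ2l
    refine ⟨fun y => (unfreeze W (g2 y)).eval νl, ?_, ?_⟩
    · intro A2 hA2
      obtain ⟨args'', hmem'', hev''⟩ := frozen_mem_inv (hg2 A2 hA2)
      have heq : (fun i => (A2.args i).eval (fun y => (unfreeze W (g2 y)).eval νl)) =
          (fun i => (args'' i).eval νl) := by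
        funext i
        have h3 : (unfreeze W ((args'' i).eval (fun x => Val.const (x + W)))).eval νl =
            (unfreeze W ((A2.args i).eval g2)).eval νl := by rw [hev'' i]
        rw [unfreeze_freeze W (args'' i) (fun c hc => hc1 c
          (atomsTerms_subset_terms Ql (by rw [← hc]; exact ⟨_, hmem'', i, rfl⟩)))] at h3
        rw [h3]
        cases harg : A2.args i with
        | var y => rfl
        | const c =>
          have hcW : c < W := (hW _ (Or.inr (Or.inl ⟨A2, hA2, i, harg⟩))).2 c rfl
          show Val.const c = (unfreeze W (Val.const c)).eval νl
          rw [show unfreeze W (Val.const c) = Term.const c from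
            if_neg (by omega : ¬ W ≤ c)]
          rfl
      rw [heq]
      exact hbl _ hmem''
    · rw [htt]
      funext i
      have h4 : (Ql.head i).eval (fun x => Val.const (x + W)) = (Q2.head i).eval g2 :=
        congrFun ht2 i
      have hsm : ∀ c', Ql.head i = Term.const c' → c' < W :=
        fun c' hc' => hc1 c' (Or.inl ⟨i, hc'⟩)
      cases hh2i : Q2.head i with
      | var y =>
        rw [hh2i] at h4
        show (Ql.head i).eval νl = (unfreeze W (g2 y)).eval νl
        have h4' : g2 y = (Ql.head i).eval (fun x => Val.const (x + W)) := h4.symm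
        rw [h4', unfreeze_freeze W (Ql.head i) hsm]
      | const c =>
        rw [hh2i] at h4
        have hcW : c < W := (hW _ (Or.inr (Or.inr ⟨i, hh2i⟩))).2 c rfl
        have h5 : (unfreeze W ((Ql.head i).eval (fun x => Val.const (x + W)))).eval νl =
            (unfreeze W (Val.const c)).eval νl := by rw [h4]; rfl
        rw [unfreeze_freeze W (Ql.head i) hsm] at h5
        rw [show unfreeze W (Val.const c) = Term.const c from
          if_neg (by omega : ¬ W ≤ c)] at h5
        exact h5
  · rintro hOr I hI t ht
    have ht' := expansion_sat M h1 hexp hI ht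
    obtain ⟨Ql, hQlR, hsat⟩ := chase_leaf_sat M hR hI ht'
    rcases hOr with rfl | hcont
    · exact absurd hQlR List.not_mem_nil
    · exact hcont I ⟨Ql, hQlR, hsat⟩

end CertainViews
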